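/- arXiv:2509.06037 — 3 statements merged into one kernel-verified Lean document; each statement's English description precedes it below -/
import Mathlib

section
/- For any orientation-preserving homeomorphism f of the circle, the polynomial entropy of the induced map C(f) on the hyperspace of subcontinua of S¹ is at most 2. -/
open Filter TopologicalSpace Set

section PolyEntropy

variable {X : Type*} [PseudoMetricSpace X]

/-- The dynamic (Bowen) metric `d_n^f(x,y) = max_{0 ≤ k < n} d(f^k x, f^k y)`. -/
noncomputable def dynDist (f : X → X) (n : ℕ) (x y : X) : ℝ :=
  ⨆ k ∈ Finset.range n, dist (f^[k] x) (f^[k] y)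

/-- `E` is `(n,ε)`-separated for `f`. -/
def IsDynSeparated (f : X → X) (n : ℕ) (ε : ℝ) (E : Set X) : Prop :=
  ∀ x ∈ E, ∀ y ∈ E, x ≠ y → ε ≤ dynDist f n x y

/-- `sep(n,ε;Y)`: maximal cardinality of an `(n,ε)`-separated subset of `Y`. -/
noncomputable def sepCount (f : X → X) (Y : Set X) (n : ℕ) (ε : ℝ) : ℕ :=
  sSup {m | ∃ E : Finset X, ↑E ⊆ Y ∧ IsDynSeparated f n ε ↑E ∧ E.card = m}

/-- `span(n,ε;Y)`: minimal number of dynamic `ε`-balls covering `Y`. -/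
noncomputable def spanCount (f : X → X) (Y : Set X) (n : ℕ) (ε : ℝ) : ℕ :=
  sInf {m | ∃ s : Finset X, s.card = m ∧ Y ⊆ ⋃ c ∈ s, {x | dynDist f n c x < ε}}

/-- `cov(n,ε;Y)`: minimal number of sets of dynamic diameter `< ε` covering `Y`. -/
noncomputable def covCount (f : X → X) (Y : Set X) (n : ℕ) (ε : ℝ) : ℕ :=
  sInf {m | ∃ 𝒰 : Finset (Set X), 𝒰.card = m ∧
      (∀ U ∈ 𝒰, ∀ x ∈ U, ∀ y ∈ U, dynDist f n x y < ε) ∧ Y ⊆ ⋃₀ ↑𝒰}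

/-- Polynomial entropy of `f` on the subset `Y`:
`lim_{ε→0} limsup_{n→∞} log sep(n,ε;Y) / log n` (the limit as `ε → 0⁺` being a
supremum over `ε > 0` by monotonicity). -/
noncomputable def hpolOn (f : X → X) (Y : Set X) : EReal :=
  ⨆ ε : {ε : ℝ // 0 < ε},
    Filter.limsup (fun n : ℕ =>
      ((Real.log (sepCount f Y n ε) / Real.log n : ℝ) : EReal)) Filter.atTop

/-- Polynomial entropy of `f`. -/
noncomputable def hpol (f : X → X) : EReal := hpolOn f Set.univ

end PolyEntropy

section Hyperspace

variable {X : Type*} [TopologicalSpace X]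

/-- The hyperspace `C(X)` of subcontinua (nonempty compact connected subsets) of `X`,
with the Hausdorff metric (inherited from `NonemptyCompacts X`). -/
def Subcontinua (X : Type*) [TopologicalSpace X] : Type _ :=
  {A : NonemptyCompacts X // IsConnected (A : Set X)}

noncomputable instance {Y : Type*} [MetricSpace Y] : MetricSpace (Subcontinua Y) :=
  Subtype.metricSpace

instance : CoeSort (Subcontinua X) (Set X) := ⟨fun A => (A.1 : Set X)⟩

/-- The induced map `C(f) : C(X) → C(X)`, `A ↦ f(A)`. -/
def inducedC (f : X → X) (hf : Continuous f) : Subcontinua X → Subcontinua X :=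
  fun A => ⟨⟨⟨f '' (A.1 : Set X), A.1.isCompact.image hf⟩, A.1.nonempty.image f⟩,
    A.2.image f hf.continuousOn⟩

/-- The induced map on the hyperspace of nonempty closed (= compact) subsets. -/
def inducedNC {Y : Type*} [TopologicalSpace Y] (f : Y → Y) (hf : Continuous f) :
    NonemptyCompacts Y → NonemptyCompacts Y :=
  fun A => ⟨⟨f '' (A : Set Y), A.isCompact.image hf⟩, A.nonempty.image f⟩

end Hyperspace

section Circle

/-- `F : ℝ → ℝ` is an (orientation-preserving) lift of `f : S¹ → S¹`. -/
def IsLiftOf (F : ℝ → ℝ) (f : UnitAddCircle → UnitAddCircle) : Prop :=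
  StrictMono F ∧ (∀ x, F (x + 1) = F x + 1) ∧ ∀ x : ℝ, f (x : UnitAddCircle) = (F x : UnitAddCircle)

/-- `f` is an orientation-preserving circle map (has an increasing degree-one lift). -/
def OrientationPreserving (f : UnitAddCircle → UnitAddCircle) : Prop :=
  ∃ F : ℝ → ℝ, IsLiftOf F f

/-- `f` has Poincaré rotation number `ρ`. -/
def HasRotationNumber (f : UnitAddCircle → UnitAddCircle) (ρ : ℝ) : Prop :=
  ∃ F : ℝ → ℝ, IsLiftOf F f ∧
    Filter.Tendsto (fun n : ℕ => F^[n] 0 / n) Filter.atTop (nhds ρ)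

/-- `f` is topologically conjugate to a rotation of the circle. -/
def ConjToRotation (f : UnitAddCircle → UnitAddCircle) : Prop :=
  ∃ (φ : UnitAddCircle ≃ₜ UnitAddCircle) (a : UnitAddCircle), ∀ x, φ (f x) = φ x + a

/-- The non-wandering set of `f`. -/
def NW {X : Type*} [TopologicalSpace X] (f : X → X) : Set X :=
  {x | ∀ U ∈ nhds x, ∃ n : ℕ, 1 ≤ n ∧ (f^[n] '' U ∩ U).Nonempty}

/-- `C` is a Cantor set: nonempty, compact, perfect and totally disconnected. -/
def IsCantorSet {X : Type*} [TopologicalSpace X] (C : Set X) : Prop :=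
  C.Nonempty ∧ IsCompact C ∧ Perfect C ∧ IsTotallyDisconnected C

/-- The closed arc starting at `x`, going counterclockwise for length `t`. -/
noncomputable def arcFrom (x : UnitAddCircle) (t : ℝ) : Set UnitAddCircle :=
  (fun s : ℝ => x + (s : UnitAddCircle)) '' Set.Icc 0 t

end Circle


/- ======================= Auxiliary development ======================= -/

namespace Stmt10

open Metric Filter Set

noncomputable abbrev qc : ℝ → UnitAddCircle := ((↑) : ℝ → UnitAddCircle)

lemma dist_qc_le (s t : ℝ) : dist (qc s) (qc t) ≤ |s - t| := by
  rw [dist_eq_norm]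
  have h : qc s - qc t = qc (s - t) := rfl
  rw [h]
  exact (QuotientAddGroup.norm_mk_le_norm (m := s - t)).trans_eq (Real.norm_eq_abs _)

lemma qc_add_int (r : ℝ) (m : ℤ) : qc (r + m) = qc r := by
  have h0 : ((m : ℝ) : UnitAddCircle) = 0 := by
    simp [AddCircle.coe_eq_zero_iff]
  calc qc (r + m) = qc r + ((m:ℝ) : UnitAddCircle) := rfl
  _ = qc r := by rw [h0, add_zero]

lemma qc_surj : Function.Surjective qc := QuotientAddGroup.mk_surjective

lemma qc_eq_iff {u v : ℝ} (h : qc u = qc v) : ∃ m : ℤ, u = v + m := by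
  have := QuotientAddGroup.eq_iff_sub_mem.mp h.symm
  rw [AddSubgroup.mem_zmultiples_iff] at this
  obtain ⟨m, hm⟩ := this
  simp only [zsmul_eq_mul, mul_one] at hm
  exact ⟨-m, by push_cast; linarith⟩

lemma qc_fract (r : ℝ) : qc (Int.fract r) = qc r := by
  have : Int.fract r + (⌊r⌋ : ℤ) = r := by rw [Int.fract]; ring
  calc qc (Int.fract r) = qc (Int.fract r + (⌊r⌋ : ℤ)) := (qc_add_int _ _).symm
  _ = qc r := by rw [this]

lemma isOpenMap_qc : IsOpenMap qc := QuotientAddGroup.isOpenMap_coe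

lemma continuous_qc : Continuous qc := continuous_quotient_mk'

/- ---------- generic dynamic distance lemmas ---------- -/

lemma dynDist_le {X : Type*} [PseudoMetricSpace X] {f : X → X} {n : ℕ} {x y : X} {c : ℝ}
    (hc : 0 ≤ c) (h : ∀ k < n, dist (f^[k] x) (f^[k] y) ≤ c) : dynDist f n x y ≤ c := by
  refine Real.iSup_le (fun k => ?_) hc
  exact Real.iSup_le (fun hk => h k (Finset.mem_range.mp hk)) hc

lemma sepCount_le_of_cover {X : Type*} [PseudoMetricSpace X] {f : X → X} {Y : Set X} {n : ℕ}
    {ε : ℝ} (𝒰 : Finset (Set X))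
    (hdiam : ∀ U ∈ 𝒰, ∀ x ∈ U, ∀ y ∈ U, dynDist f n x y < ε)
    (hcov : Y ⊆ ⋃₀ ↑𝒰) : sepCount f Y n ε ≤ 𝒰.card := by
  classical
  refine csSup_le ⟨0, ⟨∅, by simp, by intro x hx; simp at hx, by simp⟩⟩ ?_
  rintro m ⟨E, hEY, hsep, rfl⟩
  have hφ : ∀ x ∈ E, ∃ U ∈ 𝒰, x ∈ U := by
    intro x hx
    have := hcov (hEY hx)
    simpa [Set.mem_sUnion] using this
  choose! φ hφ1 hφ2 using hφ
  refine Finset.card_le_card_of_injOn φ (fun x hx => hφ1 x hx) ?_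
  intro x hx y hy hxy
  by_contra hne
  have h1 := hsep x (by simpa using hx) y (by simpa using hy) hne
  have h2 := hdiam (φ x) (hφ1 x hx) x (hφ2 x hx) y (by rw [hxy]; exact hφ2 y hy)
  linarith

/- ---------- limsup computation ---------- -/

lemma limsup_le_two {a : ℕ → ℕ} {K : ℝ} (hK : 1 ≤ K)
    (h : ∀ n, 2 ≤ n → (a n : ℝ) ≤ K * (n : ℝ) ^ 2) :
    limsup (fun n : ℕ => ((Real.log (a n) / Real.log n : ℝ) : EReal)) atTop ≤ 2 := by
  set r : ℕ → ℝ := fun n => Real.log K / Real.log n + 2 with hr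
  have h1 : Tendsto (fun n : ℕ => Real.log n) atTop atTop :=
    Real.tendsto_log_atTop.comp tendsto_natCast_atTop_atTop
  have h2 : Tendsto r atTop (nhds 2) := by
    have := (tendsto_const_nhds (x := Real.log K)).div_atTop h1
    simpa using this.add (tendsto_const_nhds (x := (2:ℝ)))
  have h3 : Tendsto (fun n : ℕ => ((r n : ℝ) : EReal)) atTop (nhds ((2:ℝ) : EReal)) :=
    (EReal.tendsto_coe).2 h2
  have h4 : limsup (fun n : ℕ => ((r n : ℝ) : EReal)) atTop = ((2:ℝ) : EReal) := h3.limsup_eq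
  have hev : ∀ᶠ n : ℕ in atTop,
      ((Real.log (a n) / Real.log n : ℝ) : EReal) ≤ ((r n : ℝ) : EReal) := by
    filter_upwards [eventually_ge_atTop 2] with n hn
    have hn2 : (2:ℝ) ≤ (n : ℝ) := by exact_mod_cast hn
    have hlogn : 0 < Real.log n := Real.log_pos (by linarith)
    have hKn : (1:ℝ) ≤ K * (n:ℝ) ^ 2 := by nlinarith
    have hle : Real.log (a n) ≤ Real.log K + 2 * Real.log n := by
      have hlog2 : Real.log (K * (n:ℝ)^2) = Real.log K + 2 * Real.log n := by
        rw [Real.log_mul (by linarith) (by positivity), Real.log_pow]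
        push_cast; ring
      rcases Nat.eq_zero_or_pos (a n) with h0 | h0
      · rw [h0]
        simp only [Nat.cast_zero, Real.log_zero]
        rw [← hlog2]
        exact Real.log_nonneg hKn
      · rw [← hlog2]
        exact Real.log_le_log (by exact_mod_cast h0) (h n hn)
    have : Real.log (a n) / Real.log n ≤ r n := by
      have hrn : r n = (Real.log K + 2 * Real.log n) / Real.log n := by
        simp only [hr]
        rw [add_div, mul_div_assoc, div_self hlogn.ne']; ring
      rw [hrn]
      gcongr
    exact_mod_cast EReal.coe_le_coe_iff.mpr this
  calc limsup (fun n : ℕ => ((Real.log (a n) / Real.log n : ℝ) : EReal)) atTop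
      ≤ limsup (fun n : ℕ => ((r n : ℝ) : EReal)) atTop := limsup_le_limsup hev
    _ = ((2:ℝ) : EReal) := h4
    _ = (2 : EReal) := by norm_cast

/- ---------- lift lemmas ---------- -/

variable {f : UnitAddCircle ≃ₜ UnitAddCircle} {F : ℝ → ℝ}

lemma F_add_int (hF : IsLiftOf F (f : UnitAddCircle → UnitAddCircle)) (x : ℝ) (m : ℤ) :
    F (x + m) = F x + m := by
  have key : ∀ k : ℕ, ∀ y : ℝ, F (y + k) = F y + k := by
    intro k
    induction k with
    | zero => simp
    | succ k ih =>
      intro y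
      have : y + (k + 1 : ℕ) = (y + k) + 1 := by push_cast; ring
      rw [this, hF.2.1, ih y]
      push_cast; ring
  cases m with
  | ofNat k => exact_mod_cast key k x
  | negSucc k =>
    have := key (k+1) (x + Int.negSucc k)
    have hx : x + Int.negSucc k + ((k+1 : ℕ) : ℝ) = x := by
      push_cast; simp [Int.negSucc_eq]; ring
    rw [hx] at this
    have : F x = F (x + Int.negSucc k) + (k+1 : ℕ) := this
    push_cast [Int.negSucc_eq] at this ⊢
    linarith

lemma F_surjective (hF : IsLiftOf F (f : UnitAddCircle → UnitAddCircle)) :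
    Function.Surjective F := by
  intro y
  obtain ⟨z, hz⟩ := f.surjective (qc y)
  obtain ⟨x₀, rfl⟩ := qc_surj z
  have h2 : f (qc x₀) = qc (F x₀) := hF.2.2 x₀
  have : qc (F x₀) = qc y := by rw [← h2, hz]
  obtain ⟨m, hm⟩ := qc_eq_iff this
  refine ⟨x₀ + ((-m : ℤ) : ℝ), ?_⟩
  rw [F_add_int hF]
  push_cast
  linarith

lemma Fk_strictMono (hF : IsLiftOf F (f : UnitAddCircle → UnitAddCircle)) (k : ℕ) :
    StrictMono F^[k] := hF.1.iterate k

lemma Fk_surjective (hF : IsLiftOf F (f : UnitAddCircle → UnitAddCircle)) (k : ℕ) :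
    Function.Surjective F^[k] := (F_surjective hF).iterate k

lemma Fk_add_int (hF : IsLiftOf F (f : UnitAddCircle → UnitAddCircle)) (k : ℕ) (x : ℝ) (m : ℤ) :
    F^[k] (x + m) = F^[k] x + m := by
  induction k generalizing x with
  | zero => simp
  | succ k ih =>
    rw [Function.iterate_succ_apply, Function.iterate_succ_apply, F_add_int hF, ih]

lemma Fk_semiconj (hF : IsLiftOf F (f : UnitAddCircle → UnitAddCircle)) (k : ℕ) (s : ℝ) :
    (f : UnitAddCircle → UnitAddCircle)^[k] (qc s) = qc (F^[k] s) := by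
  induction k generalizing s with
  | zero => simp
  | succ k ih =>
    have h2 : f (qc s) = qc (F s) := hF.2.2 s
    rw [Function.iterate_succ_apply, Function.iterate_succ_apply, h2]
    exact ih (F s)

lemma Fk_image_Icc (hF : IsLiftOf F (f : UnitAddCircle → UnitAddCircle)) (k : ℕ) {a b : ℝ}
    (hab : a ≤ b) : F^[k] '' Set.Icc a b = Set.Icc (F^[k] a) (F^[k] b) := by
  apply subset_antisymm
  · rintro _ ⟨x, hx, rfl⟩
    exact ⟨(Fk_strictMono hF k).monotone hx.1, (Fk_strictMono hF k).monotone hx.2⟩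
  · rintro y hy
    obtain ⟨x, rfl⟩ := Fk_surjective hF k y
    refine ⟨x, ⟨?_, ?_⟩, rfl⟩
    · by_contra hlt
      push_neg at hlt
      exact absurd ((Fk_strictMono hF k) hlt) (not_lt.mpr hy.1)
    · by_contra hlt
      push_neg at hlt
      exact absurd ((Fk_strictMono hF k) hlt) (not_lt.mpr hy.2)

/- ---------- Hausdorff distance between arcs ---------- -/

lemma arc_approx (α β τ υ : ℝ) (hτ : 0 ≤ τ) (hυ : 0 ≤ υ) :
    ∀ x ∈ qc '' Set.Icc α (α + τ), ∃ y ∈ qc '' Set.Icc β (β + υ),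
      dist x y ≤ |α - β| + |τ - υ| := by
  rintro _ ⟨rr, hrr, rfl⟩
  set s := rr - α with hs
  have hs0 : 0 ≤ s := by simp [hs]; linarith [hrr.1]
  have hsτ : s ≤ τ := by simp [hs]; linarith [hrr.2]
  set s' : ℝ := if τ = 0 then 0 else s * (υ / τ) with hs'
  have hs'0 : 0 ≤ s' := by
    rw [hs']; split
    · exact le_refl _
    · positivity
  have hs'υ : s' ≤ υ := by
    rw [hs']; split
    · exact hυ
    · rename_i hτ0
      have hτpos : 0 < τ := lt_of_le_of_ne hτ (Ne.symm hτ0)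
      calc s * (υ / τ) ≤ τ * (υ / τ) := by
            apply mul_le_mul_of_nonneg_right hsτ (by positivity)
        _ = υ := by field_simp
  have hss' : |s - s'| ≤ |τ - υ| := by
    rw [hs']; split
    · rename_i hτ0
      have hs00 : s = 0 := le_antisymm (hτ0 ▸ hsτ) hs0
      rw [hs00]
      simpa using abs_nonneg (τ - υ)
    · rename_i hτ0
      have hτpos : 0 < τ := lt_of_le_of_ne hτ (Ne.symm hτ0)
      have : s - s * (υ / τ) = (s / τ) * (τ - υ) := by field_simp
      rw [this, abs_mul]
      have h1 : |s / τ| ≤ 1 := by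
        rw [abs_div, abs_of_nonneg hs0, abs_of_pos hτpos]
        exact (div_le_one hτpos).mpr hsτ
      calc |s / τ| * |τ - υ| ≤ 1 * |τ - υ| := by
            apply mul_le_mul_of_nonneg_right h1 (abs_nonneg _)
        _ = |τ - υ| := one_mul _
  refine ⟨qc (β + s'), ⟨β + s', ⟨by linarith, by linarith⟩, rfl⟩, ?_⟩
  have hd := dist_qc_le rr (β + s')
  have : |rr - (β + s')| ≤ |α - β| + |τ - υ| := by
    have : rr - (β + s') = (α - β) + (s - s') := by rw [hs]; ring
    rw [this]
    exact (abs_add_le _ _).trans (by linarith [hss'])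
  linarith

lemma hausdorff_arc (α β τ υ : ℝ) (hτ : 0 ≤ τ) (hυ : 0 ≤ υ) :
    hausdorffDist (qc '' Set.Icc α (α + τ)) (qc '' Set.Icc β (β + υ)) ≤ |α - β| + |τ - υ| := by
  apply hausdorffDist_le_of_mem_dist (by positivity)
  · exact arc_approx α β τ υ hτ hυ
  · intro y hy
    obtain ⟨x, hx, hd⟩ := arc_approx β α υ τ hυ hτ y hy
    exact ⟨x, hx, by rw [dist_comm, abs_sub_comm α β, abs_sub_comm τ υ]; rwa [dist_comm] at hd⟩

/- ---------- classification of subcontinua of the circle ---------- -/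

lemma subcont_classify {A : Set UnitAddCircle} (hne : A.Nonempty) (hA : IsCompact A)
    (hconn : IsPreconnected A) : ∃ a t : ℝ, 0 ≤ t ∧ t ≤ 1 ∧ A = qc '' Set.Icc a (a + t) := by
  by_cases huniv : A = univ
  · refine ⟨0, 1, zero_le_one, le_refl _, ?_⟩
    rw [huniv]
    symm
    refine subset_antisymm (subset_univ _) (fun x _ => ?_)
    obtain ⟨r, rfl⟩ := qc_surj x
    refine ⟨Int.fract r, ⟨Int.fract_nonneg r, by linarith [Int.fract_lt_one r]⟩, qc_fract r⟩
  · obtain ⟨p, hp⟩ : ∃ p, p ∉ A := by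
      by_contra hc
      push_neg at hc
      exact huniv (eq_univ_of_forall hc)
    obtain ⟨p', rfl⟩ := qc_surj p
    have hAcl : IsClosed A := hA.isClosed
    set B : Set ℝ := qc ⁻¹' A ∩ Set.Ioo p' (p' + 1) with hB
    have hp1 : qc (p' + 1) = qc p' := by
      have := qc_add_int p' 1
      simpa using this
    have hBeq : B = qc ⁻¹' A ∩ Set.Icc p' (p' + 1) := by
      apply subset_antisymm
      · exact inter_subset_inter_right _ Set.Ioo_subset_Icc_self
      · rintro r ⟨hr1, hr2⟩
        refine ⟨hr1, lt_of_le_of_ne hr2.1 ?_, lt_of_le_of_ne hr2.2 ?_⟩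
        · rintro rfl; exact hp hr1
        · rintro rfl; rw [Set.mem_preimage, hp1] at hr1; exact hp hr1
    have hBcpt : IsCompact B := by
      rw [hBeq]
      exact isCompact_Icc.inter_left (hAcl.preimage continuous_qc)
    have hmem : ∀ x ∈ A, ∃ r ∈ B, qc r = x := by
      intro x hx
      obtain ⟨r, rfl⟩ := qc_surj x
      have hfr : qc (p' + Int.fract (r - p')) = qc r := by
        have h1 : p' + Int.fract (r - p') = (r + (-⌊r - p'⌋ : ℤ)) := by
          push_cast [Int.fract]; ring
        rw [h1, qc_add_int]
      have hfr0 : Int.fract (r - p') ≠ 0 := by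
        intro h0
        rw [h0, add_zero] at hfr
        rw [← hfr] at hx
        exact hp hx
      refine ⟨p' + Int.fract (r - p'), ⟨?_, ?_, ?_⟩, hfr⟩
      · rw [Set.mem_preimage, hfr]; exact hx
      · have := lt_of_le_of_ne (Int.fract_nonneg (r - p')) (Ne.symm hfr0)
        linarith
      · linarith [Int.fract_lt_one (r - p')]
    have himg : qc '' B = A := by
      apply subset_antisymm
      · rintro _ ⟨r, ⟨hr, _⟩, rfl⟩; exact hr
      · intro x hx
        obtain ⟨r, h1, h2⟩ := hmem x hx
        exact ⟨r, h1, h2⟩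
    have hBne : B.Nonempty := by
      obtain ⟨x, hx⟩ := hne
      obtain ⟨r, h1, _⟩ := hmem x hx
      exact ⟨r, h1⟩
    have hBconn : IsPreconnected B := by
      intro U V hU hV hBUV hBU hBV
      have hres := hconn (qc '' (U ∩ Set.Ioo p' (p' + 1))) (qc '' (V ∩ Set.Ioo p' (p' + 1)))
        (isOpenMap_qc _ (hU.inter isOpen_Ioo)) (isOpenMap_qc _ (hV.inter isOpen_Ioo))
        ?_ ?_ ?_
      · obtain ⟨x, hxA, ⟨u, ⟨huU, huI⟩, hu⟩, ⟨v, ⟨hvV, hvI⟩, hv⟩⟩ := hres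
        have huv : u = v := by
          obtain ⟨m, hm⟩ := qc_eq_iff (hu.trans hv.symm)
          have : |(m : ℝ)| < 1 := by
            rw [abs_lt]
            constructor <;> [nlinarith [huI.1, huI.2, hvI.1, hvI.2];
              nlinarith [huI.1, huI.2, hvI.1, hvI.2]]
          have hm0 : m = 0 := by
            have h := abs_lt.mp this
            have h1 : (-1 : ℤ) < m := by exact_mod_cast h.1
            have h2 : m < 1 := by exact_mod_cast h.2
            omega
          rw [hm0] at hm; simpa using hm
        refine ⟨u, ⟨?_, huI⟩, huU, huv ▸ hvV⟩
        rw [Set.mem_preimage, hu]; exact hxA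
      · intro x hx
        obtain ⟨r, hrB, rfl⟩ := hmem x hx
        rcases hBUV hrB with h | h
        · exact Or.inl ⟨r, ⟨h, hrB.2⟩, rfl⟩
        · exact Or.inr ⟨r, ⟨h, hrB.2⟩, rfl⟩
      · obtain ⟨r, hrB, hrU⟩ := hBU
        exact ⟨qc r, himg ▸ Set.mem_image_of_mem qc hrB, ⟨r, ⟨hrU, hrB.2⟩, rfl⟩⟩
      · obtain ⟨r, hrB, hrV⟩ := hBV
        exact ⟨qc r, himg ▸ Set.mem_image_of_mem qc hrB, ⟨r, ⟨hrV, hrB.2⟩, rfl⟩⟩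
    set a := sInf B with ha
    set b := sSup B with hb
    have haB : a ∈ B := hBcpt.sInf_mem hBne
    have hbB : b ∈ B := hBcpt.sSup_mem hBne
    have hab : a ≤ b := le_csSup hBcpt.bddAbove haB
    have hBIcc : B = Set.Icc a b := by
      apply subset_antisymm
      · exact fun r hr => ⟨csInf_le hBcpt.bddBelow hr, le_csSup hBcpt.bddAbove hr⟩
      · exact hBconn.Icc_subset haB hbB
    refine ⟨a, b - a, by linarith, ?_, ?_⟩
    · have h1 := haB.2.1
      have h2 := hbB.2.2
      linarith
    · rw [show a + (b - a) = b by ring, ← himg, hBIcc]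


/- ---------- the grid ---------- -/

noncomputable def nxt (G : Finset ℝ) (x : ℝ) : ℝ :=
  sInf {y ∈ insert (1:ℝ) (↑G : Set ℝ) | x < y}

lemma nxt_spec (G : Finset ℝ) {x : ℝ} (hx1 : x < 1) :
    nxt G x ∈ insert (1:ℝ) (↑G : Set ℝ) ∧ x < nxt G x := by
  have hfin : {y ∈ insert (1:ℝ) (↑G : Set ℝ) | x < y}.Finite :=
    (G.finite_toSet.insert 1).sep _
  have hne : {y ∈ insert (1:ℝ) (↑G : Set ℝ) | x < y}.Nonempty :=
    ⟨1, Set.mem_insert _ _, hx1⟩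
  exact hne.csInf_mem hfin

lemma nxt_le (G : Finset ℝ) {x y : ℝ} (hy : y ∈ insert (1:ℝ) (↑G : Set ℝ)) (hxy : x < y) :
    nxt G x ≤ y := by
  have hfin : {y ∈ insert (1:ℝ) (↑G : Set ℝ) | x < y}.Finite :=
    (G.finite_toSet.insert 1).sep _
  exact csInf_le hfin.bddBelow ⟨hy, hxy⟩

lemma nxt_le_one (G : Finset ℝ) {x : ℝ} (hx1 : x < 1) : nxt G x ≤ 1 :=
  nxt_le G (Set.mem_insert _ _) hx1

lemma grid_exists (hF : IsLiftOf F (f : UnitAddCircle → UnitAddCircle)) (n N : ℕ) (hN : 0 < N) :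
    ∃ G : Finset ℝ, (0:ℝ) ∈ G ∧ (↑G : Set ℝ) ⊆ Set.Ico (0:ℝ) 1 ∧ G.card ≤ n * N + 1 ∧
      ∀ x ∈ G, ∀ k < n, F^[k] (nxt G x) - F^[k] x ≤ 1 / N := by
  classical
  set inv : ℕ → ℝ → ℝ := fun k => Function.surjInv (Fk_surjective hF k) with hinv
  set G : Finset ℝ := insert 0 (((Finset.range n) ×ˢ (Finset.range N)).image
      (fun p => Int.fract (inv p.1 ((p.2 : ℝ) / N)))) with hG
  have hsub : (↑G : Set ℝ) ⊆ Set.Ico (0:ℝ) 1 := by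
    intro x hx
    simp only [hG, Finset.coe_insert, Set.mem_insert_iff, Finset.coe_image,
      Set.mem_image] at hx
    rcases hx with rfl | ⟨p, _, rfl⟩
    · exact ⟨le_refl _, zero_lt_one⟩
    · exact ⟨Int.fract_nonneg _, Int.fract_lt_one _⟩
  refine ⟨G, Finset.mem_insert_self _ _, hsub, ?_, ?_⟩
  · calc G.card ≤ _ + 1 := Finset.card_insert_le _ _
      _ ≤ n * N + 1 := by
        have := Finset.card_image_le (s := (Finset.range n) ×ˢ (Finset.range N))
          (f := fun p => Int.fract (inv p.1 ((p.2 : ℝ) / N)))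
        simp only [Finset.card_product, Finset.card_range] at this
        omega
  · intro x hxG k hk
    by_contra hcon
    push_neg at hcon
    have hx0 : 0 ≤ x := (hsub hxG).1
    have hx1 : x < 1 := (hsub hxG).2
    have hNR : (0:ℝ) < N := by exact_mod_cast hN
    set m : ℤ := ⌊(N:ℝ) * F^[k] x⌋ + 1 with hm
    have hmR : (m:ℝ) = (⌊(N:ℝ) * F^[k] x⌋ : ℝ) + 1 := by rw [hm]; push_cast; ring
    have hfl1 := Int.lt_floor_add_one ((N:ℝ) * F^[k] x)
    have hfl2 := Int.floor_le ((N:ℝ) * F^[k] x)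
    have hm1 : F^[k] x < (m:ℝ)/N := by
      rw [lt_div_iff₀ hNR, hmR]
      nlinarith [hfl1]
    have hm2 : (m:ℝ)/N ≤ F^[k] x + 1/N := by
      rw [div_le_iff₀ hNR, hmR]
      have expand : (F^[k] x + 1/(N:ℝ)) * N = (N:ℝ) * F^[k] x + 1 := by
        field_simp
      rw [expand]
      linarith
    have hm3 : (m:ℝ)/N < F^[k] (nxt G x) := by
      have := hcon
      linarith
    set j : ℕ := (m % N).toNat with hj
    set d : ℤ := m / N with hd
    have hmod := Int.mul_ediv_add_emod m N
    have hmodlt : m % (N:ℤ) < N := Int.emod_lt_of_pos m (by exact_mod_cast hN)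
    have hmodge : 0 ≤ m % (N:ℤ) := Int.emod_nonneg m (by exact_mod_cast hN.ne')
    have hjN : j < N := by omega
    have hjm : (j : ℤ) = m % N := Int.toNat_of_nonneg hmodge
    set w := inv k ((j:ℝ)/N) with hw
    have hFw : F^[k] w = (j:ℝ)/N := Function.surjInv_eq (Fk_surjective hF k) _
    set z := w + (d:ℝ) with hz
    have hFz : F^[k] z = (m:ℝ)/N := by
      have h2 : m = (N:ℤ) * d + (j:ℤ) := by rw [hjm, hd]; linarith [hmod]
      have hmz : (m:ℝ) = (j:ℝ) + (N:ℝ) * (d:ℝ) := by rw [h2]; push_cast; ring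
      rw [hz, Fk_add_int hF, hFw, hmz]
      field_simp
    have hxz : x < z := by
      have := (Fk_strictMono hF k).lt_iff_lt (a := x) (b := z)
      apply this.mp
      rw [hFz]
      exact hm1
    have hznxt : z < nxt G x := by
      have := (Fk_strictMono hF k).lt_iff_lt (a := z) (b := nxt G x)
      apply this.mp
      rw [hFz]
      exact hm3
    have hz0 : 0 ≤ z := le_trans hx0 hxz.le
    have hz1 : z < 1 := lt_of_lt_of_le hznxt (nxt_le_one G hx1)
    have hzG : z ∈ G := by
      have hfz : Int.fract (inv k ((j:ℝ)/N)) = z := by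
        have h1 : Int.fract z = z := Int.fract_eq_self.mpr ⟨hz0, hz1⟩
        have h2 : Int.fract w = Int.fract z := by
          rw [hz, Int.fract_add_intCast]
        rw [← hw, h2, h1]
      rw [hG]
      apply Finset.mem_insert_of_mem
      apply Finset.mem_image.mpr
      exact ⟨(k, j), Finset.mem_product.mpr ⟨Finset.mem_range.mpr hk, Finset.mem_range.mpr hjN⟩,
        hfz⟩
    have : nxt G x ≤ z := nxt_le G (Set.mem_insert_of_mem _ hzG) hxz
    linarith

/- ---------- the induced map on the hyperspace ---------- -/

lemma inducedC_iter_coe (k : ℕ) (A : Subcontinua UnitAddCircle) :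
    ((((inducedC (f : UnitAddCircle → UnitAddCircle) f.continuous)^[k] A).1 :
      Set UnitAddCircle)) = (f : UnitAddCircle → UnitAddCircle)^[k] '' (A.1 : Set UnitAddCircle) := by
  induction k with
  | zero => simp
  | succ k ih =>
    have h1 : (f : UnitAddCircle → UnitAddCircle)^[k+1] '' (A.1 : Set UnitAddCircle) =
        (f : UnitAddCircle → UnitAddCircle) ''
          ((f : UnitAddCircle → UnitAddCircle)^[k] '' (A.1 : Set UnitAddCircle)) := by
      rw [Function.iterate_succ', Set.image_comp]
    rw [Function.iterate_succ_apply', h1, ← ih]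
    rfl

lemma subcont_dist_eq (A B : Subcontinua UnitAddCircle) :
    dist A B = hausdorffDist (A.1 : Set UnitAddCircle) (B.1 : Set UnitAddCircle) := rfl

/- ---------- the covering bound ---------- -/

lemma sep_bound (hF : IsLiftOf F (f : UnitAddCircle → UnitAddCircle)) (n N : ℕ) (hN : 0 < N)
    (ε : ℝ) (hε : 3 / N < ε) :
    sepCount (inducedC (f : UnitAddCircle → UnitAddCircle) f.continuous) Set.univ n ε
      ≤ 2 * (n * N + 1)^2 := by
  classical
  obtain ⟨G, hG0, hGsub, hGcard, hGkey⟩ := grid_exists hF n N hN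
  have hNR : (0:ℝ) < N := by exact_mod_cast hN
  -- the pieces of the cover
  set P : ℝ → ℝ → ℕ → Set (Subcontinua UnitAddCircle) := fun x y w =>
    {A | ∃ a t : ℝ, 0 ≤ t ∧ t ≤ 1 ∧ x ≤ a ∧ a ≤ nxt G x ∧ y + w ≤ a + t ∧
      a + t ≤ nxt G y + w ∧ (A.1 : Set UnitAddCircle) = qc '' Set.Icc a (a + t)} with hP
  set 𝒰 : Finset (Set (Subcontinua UnitAddCircle)) :=
    ((G ×ˢ G) ×ˢ ({0, 1} : Finset ℕ)).image (fun p => P p.1.1 p.1.2 p.2) with h𝒰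
  have hcard : 𝒰.card ≤ 2 * (n * N + 1)^2 := by
    calc 𝒰.card ≤ ((G ×ˢ G) ×ˢ ({0, 1} : Finset ℕ)).card := Finset.card_image_le
      _ ≤ 2 * (n * N + 1)^2 := by
        rw [Finset.card_product, Finset.card_product]
        have h2 : ({0, 1} : Finset ℕ).card ≤ 2 := by decide
        have := hGcard
        nlinarith [hGcard]
  -- membership in a cell
  have hcell : ∀ a : ℝ, a ∈ Set.Ico (0:ℝ) 1 → ∃ x ∈ G, x ≤ a ∧ a ≤ nxt G x := by
    intro a ha
    classical
    set Gf := G.filter (· ≤ a) with hGf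
    have hGfne : Gf.Nonempty := ⟨0, Finset.mem_filter.mpr ⟨hG0, ha.1⟩⟩
    set x := Gf.max' hGfne with hx
    have hxG : x ∈ G := (Finset.mem_filter.mp (Gf.max'_mem hGfne)).1
    have hxa : x ≤ a := (Finset.mem_filter.mp (Gf.max'_mem hGfne)).2
    refine ⟨x, hxG, hxa, ?_⟩
    by_contra hcon
    push_neg at hcon
    have hx1 : x < 1 := lt_of_le_of_lt hxa ha.2
    obtain ⟨hmem, hlt⟩ := nxt_spec G hx1
    rcases hmem with h1 | hG'
    · rw [h1] at hcon; linarith [ha.2]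
    · have : nxt G x ∈ Gf := Finset.mem_filter.mpr ⟨by exact_mod_cast hG', hcon.le⟩
      have := Gf.le_max' _ this
      rw [← hx] at this
      linarith
  -- the pieces cover everything
  have hcov : (Set.univ : Set (Subcontinua UnitAddCircle)) ⊆ ⋃₀ ↑𝒰 := by
    intro A _
    have hconn : IsConnected (A.1 : Set UnitAddCircle) := A.2
    obtain ⟨a₀, t, ht0, ht1, hAeq⟩ := subcont_classify hconn.nonempty A.1.isCompact hconn.2
    -- normalize the left endpoint into [0,1)
    set a := Int.fract a₀ with ha
    have haeq : qc '' Set.Icc a (a + t) = qc '' Set.Icc a₀ (a₀ + t) := by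
      have h1 : Set.Icc a (a + t) = (fun r => r - ((⌊a₀⌋ : ℤ) : ℝ)) '' Set.Icc a₀ (a₀ + t) := by
        rw [Set.image_sub_const_Icc]
        congr 1 <;> (rw [ha, Int.fract]; push_cast; ring)
      rw [h1, ← Set.image_comp]
      apply Set.image_congr
      intro r _
      show qc (r - ((⌊a₀⌋ : ℤ) : ℝ)) = qc r
      have : r - ((⌊a₀⌋ : ℤ) : ℝ) = r + ((-⌊a₀⌋ : ℤ) : ℝ) := by push_cast; ring
      rw [this, qc_add_int]
    have hA2 : (A.1 : Set UnitAddCircle) = qc '' Set.Icc a (a + t) := by rw [haeq, hAeq]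
    have ha01 : a ∈ Set.Ico (0:ℝ) 1 := ⟨Int.fract_nonneg _, Int.fract_lt_one _⟩
    obtain ⟨x, hxG, hxa, hax⟩ := hcell a ha01
    -- the right endpoint
    have he0 : 0 ≤ a + t := by linarith [ha01.1]
    have he2 : a + t < 2 := by linarith [ha01.2]
    by_cases hcase : a + t < 1
    · obtain ⟨y, hyG, hy1, hy2⟩ := hcell (a + t) ⟨he0, hcase⟩
      have hPmem : P x y 0 ∈ 𝒰 := by
        rw [h𝒰]
        apply Finset.mem_image.mpr
        refine ⟨((x, y), 0), ?_, rfl⟩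
        apply Finset.mem_product.mpr
        exact ⟨Finset.mem_product.mpr ⟨hxG, hyG⟩, by simp⟩
      refine ⟨P x y 0, Finset.mem_coe.mpr hPmem, ?_⟩
      exact ⟨a, t, ht0, ht1, hxa, hax, by push_cast; linarith, by push_cast; linarith, hA2⟩
    · push_neg at hcase
      have h1 : a + t - 1 ∈ Set.Ico (0:ℝ) 1 := ⟨by linarith, by linarith⟩
      obtain ⟨y, hyG, hy1, hy2⟩ := hcell (a + t - 1) h1
      have hPmem : P x y 1 ∈ 𝒰 := by
        rw [h𝒰]
        apply Finset.mem_image.mpr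
        refine ⟨((x, y), 1), ?_, rfl⟩
        apply Finset.mem_product.mpr
        exact ⟨Finset.mem_product.mpr ⟨hxG, hyG⟩, by simp⟩
      refine ⟨P x y 1, Finset.mem_coe.mpr hPmem, ?_⟩
      exact ⟨a, t, ht0, ht1, hxa, hax, by push_cast; linarith, by push_cast; linarith, hA2⟩
  -- the pieces have small dynamical diameter
  have hdiam : ∀ U ∈ 𝒰, ∀ A ∈ U, ∀ B ∈ U,
      dynDist (inducedC (f : UnitAddCircle → UnitAddCircle) f.continuous) n A B < ε := by
    intro U hU A hA B hB
    obtain ⟨⟨⟨x, y⟩, w⟩, hpmem, rfl⟩ := Finset.mem_image.mp hU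
    have hxG : x ∈ G := (Finset.mem_product.mp (Finset.mem_product.mp hpmem).1).1
    have hyG : y ∈ G := (Finset.mem_product.mp (Finset.mem_product.mp hpmem).1).2
    dsimp only at hA hB
    obtain ⟨a, t, ht0, ht1, hxa, hax, hyat1, hyat2, hAeq⟩ := hA
    obtain ⟨b, u, hu0, hu1, hxb, hbx, hybu1, hybu2, hBeq⟩ := hB
    have key : dynDist (inducedC (f : UnitAddCircle → UnitAddCircle) f.continuous) n A B
        ≤ 3 / N := by
      apply dynDist_le (by positivity)
      intro k hk
      rw [subcont_dist_eq, inducedC_iter_coe, inducedC_iter_coe, hAeq, hBeq]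
      have himA : (f : UnitAddCircle → UnitAddCircle)^[k] '' (qc '' Set.Icc a (a + t)) =
          qc '' Set.Icc (F^[k] a) (F^[k] (a + t)) := by
        rw [← Fk_image_Icc hF k (by linarith : a ≤ a + t), Set.image_image, Set.image_image]
        apply Set.image_congr
        intro r _
        exact Fk_semiconj hF k r
      have himB : (f : UnitAddCircle → UnitAddCircle)^[k] '' (qc '' Set.Icc b (b + u)) =
          qc '' Set.Icc (F^[k] b) (F^[k] (b + u)) := by
        rw [← Fk_image_Icc hF k (by linarith : b ≤ b + u), Set.image_image, Set.image_image]
        apply Set.image_congr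
        intro r _
        exact Fk_semiconj hF k r
      rw [himA, himB]
      set α := F^[k] a with hα
      set β := F^[k] b with hβ
      set τ := F^[k] (a + t) - F^[k] a with hτ
      set υ := F^[k] (b + u) - F^[k] b with hυ
      have hτ0 : 0 ≤ τ := by
        rw [hτ]
        have := (Fk_strictMono hF k).monotone (by linarith : a ≤ a + t)
        linarith
      have hυ0 : 0 ≤ υ := by
        rw [hυ]
        have := (Fk_strictMono hF k).monotone (by linarith : b ≤ b + u)
        linarith
      have hIA : Set.Icc (F^[k] a) (F^[k] (a + t)) = Set.Icc α (α + τ) := by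
        rw [hα, hτ]; congr 1; ring
      have hIB : Set.Icc (F^[k] b) (F^[k] (b + u)) = Set.Icc β (β + υ) := by
        rw [hβ, hυ]; congr 1; ring
      rw [hIA, hIB]
      -- bounds
      have hgx := hGkey x hxG k hk
      have hgy := hGkey y hyG k hk
      have hmono := (Fk_strictMono hF k).monotone
      have hab1 : |α - β| ≤ 1 / N := by
        rw [abs_le]
        constructor
        · have h1 : β ≤ F^[k] (nxt G x) := hmono hbx
          have h2 : F^[k] x ≤ α := hmono hxa
          linarith
        · have h1 : α ≤ F^[k] (nxt G x) := hmono hax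
          have h2 : F^[k] x ≤ β := hmono hxb
          linarith
      have hend : |F^[k] (a + t) - F^[k] (b + u)| ≤ 1 / N := by
        have e1 : F^[k] (a + t) ≤ F^[k] (nxt G y) + w := by
          have := hmono hyat2
          rwa [show nxt G y + (w:ℝ) = nxt G y + (w:ℤ) by push_cast; ring,
            Fk_add_int hF, show ((w:ℤ):ℝ) = (w:ℝ) by push_cast; ring] at this
        have e2 : F^[k] y + w ≤ F^[k] (a + t) := by
          have := hmono hyat1
          rwa [show y + (w:ℝ) = y + (w:ℤ) by push_cast; ring,
            Fk_add_int hF, show ((w:ℤ):ℝ) = (w:ℝ) by push_cast; ring] at this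
        have e3 : F^[k] (b + u) ≤ F^[k] (nxt G y) + w := by
          have := hmono hybu2
          rwa [show nxt G y + (w:ℝ) = nxt G y + (w:ℤ) by push_cast; ring,
            Fk_add_int hF, show ((w:ℤ):ℝ) = (w:ℝ) by push_cast; ring] at this
        have e4 : F^[k] y + w ≤ F^[k] (b + u) := by
          have := hmono hybu1
          rwa [show y + (w:ℝ) = y + (w:ℤ) by push_cast; ring,
            Fk_add_int hF, show ((w:ℤ):ℝ) = (w:ℝ) by push_cast; ring] at this
        rw [abs_le]
        constructor <;> linarith
      have hτυ : |τ - υ| ≤ 2 / N := by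
        have hdiff : τ - υ = (F^[k] (a + t) - F^[k] (b + u)) - (α - β) := by
          rw [hτ, hυ, hα, hβ]; ring
        have h1 := abs_le.mp hab1
        have h2 := abs_le.mp hend
        rw [abs_le]
        constructor <;>
          linarith [h1.1, h1.2, h2.1, h2.2, show (2:ℝ)/N = 1/N + 1/N from by ring]
      calc hausdorffDist (qc '' Set.Icc α (α + τ)) (qc '' Set.Icc β (β + υ))
          ≤ |α - β| + |τ - υ| := hausdorff_arc α β τ υ hτ0 hυ0
        _ ≤ 1 / N + 2 / N := by linarith
        _ = 3 / N := by ring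
    linarith
  calc sepCount (inducedC (f : UnitAddCircle → UnitAddCircle) f.continuous) Set.univ n ε
      ≤ 𝒰.card := sepCount_le_of_cover 𝒰 hdiam hcov
    _ ≤ 2 * (n * N + 1)^2 := hcard

end Stmt10

/-- for any orientation-preserving circle homeomorphism `f`,
`h_pol(C(f)) ≤ 2`. -/
theorem stmt_10 (f : UnitAddCircle ≃ₜ UnitAddCircle)
    (hop : OrientationPreserving (f : UnitAddCircle → UnitAddCircle)) :
    hpol (inducedC (f : UnitAddCircle → UnitAddCircle) f.continuous) ≤ 2 := by
  obtain ⟨F, hF⟩ := hop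
  unfold hpol hpolOn
  refine iSup_le ?_
  rintro ⟨ε, hε⟩
  set N : ℕ := ⌊3 / ε⌋₊ + 1 with hN
  have hN0 : 0 < N := Nat.succ_pos _
  have hNR : (0:ℝ) < N := by exact_mod_cast hN0
  have hNε : 3 / (N:ℝ) < ε := by
    have h1 : 3 / ε < (N:ℝ) := by
      rw [hN]
      push_cast
      exact Nat.lt_floor_add_one _
    rw [div_lt_iff₀ hNR]
    rw [div_lt_iff₀ hε] at h1
    nlinarith
  have hsep : ∀ n : ℕ,
      sepCount (inducedC (f : UnitAddCircle → UnitAddCircle) f.continuous) Set.univ n ε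
        ≤ 2 * (n * N + 1)^2 := fun n => Stmt10.sep_bound hF n N hN0 ε hNε
  refine Stmt10.limsup_le_two (K := 2 * ((N:ℝ) + 1)^2) (by nlinarith) ?_
  intro n hn
  have h1 := hsep n
  have h2 : 2 * (n * N + 1)^2 ≤ 2 * ((N + 1) * n)^2 := by
    have h1n : 1 ≤ n := le_trans (by norm_num) hn
    have hle : n * N + 1 ≤ (N + 1) * n := by
      calc n * N + 1 ≤ n * N + n := Nat.add_le_add_left h1n _
        _ = (N + 1) * n := by ring
    exact Nat.mul_le_mul_left 2 (Nat.pow_le_pow_left hle 2)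
  have h3 : ((2 * ((N + 1) * n)^2 : ℕ) : ℝ) = 2 * ((N:ℝ) + 1)^2 * (n:ℝ)^2 := by
    push_cast
    ring
  calc (↑(sepCount (inducedC (f : UnitAddCircle → UnitAddCircle) f.continuous) Set.univ n ε) : ℝ)
      ≤ ((2 * (n * N + 1)^2 : ℕ) : ℝ) := by exact_mod_cast h1
    _ ≤ ((2 * ((N + 1) * n)^2 : ℕ) : ℝ) := by exact_mod_cast h2
    _ = 2 * ((N:ℝ) + 1)^2 * (n:ℝ)^2 := h3
end

section
/- Let f : S¹ → S¹ be an orientation-preserving homeomorphism with rational rotation number which is not conjugate to a rotation. Then the polynomial entropy of the induced map C(f) on the hyperspace of subcontinua is at least 2. -/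
open Filter TopologicalSpace Set

namespace Stmt11

lemma lift_add_int {F : ℝ → ℝ} (hF : ∀ x, F (x+1) = F x + 1) (x : ℝ) (m : ℤ) :
    F (x + m) = F x + m := by
  induction m using Int.induction_on with
  | zero => simp
  | succ k ih =>
      have : x + ((k : ℤ) + 1 : ℤ) = (x + (k:ℤ)) + 1 := by push_cast; ring
      rw [this, hF, ih]; push_cast; ring
  | pred k ih =>
      have h1 := hF (x + (-(k:ℤ)-1 : ℤ))
      have : (x + (-(k:ℤ)-1 : ℤ)) + 1 = x + (-(k:ℤ) : ℤ) := by push_cast; ring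
      rw [this, ih] at h1
      push_cast at h1 ⊢
      have : x + (-(k:ℝ)-1) = x - k - 1 := by ring
      rw [this] at h1
      have g : x + (-(k:ℝ) - 1) = x - k - 1 := by ring
      rw [g]
      linarith

lemma iter_lift_add_int {F : ℝ → ℝ} (hF : ∀ x, F (x+1) = F x + 1) (k : ℕ) (x : ℝ) (m : ℤ) :
    F^[k] (x + m) = F^[k] x + m := by
  induction k generalizing x with
  | zero => simp
  | succ k ih =>
      rw [Function.iterate_succ_apply, Function.iterate_succ_apply, lift_add_int hF, ih]

/-- If `G` is continuous, commutes with `+1`, and has no fixed point, it is uniformly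
displaced in one direction. -/
lemma displacement {G : ℝ → ℝ} (hc : Continuous G) (hG1 : ∀ x, G (x+1) = G x + 1)
    (h0 : ∀ x, G x ≠ x) :
    (∃ δ > 0, ∀ x, x + δ ≤ G x) ∨ (∃ δ > 0, ∀ x, G x ≤ x - δ) := by
  set h : ℝ → ℝ := fun x => G x - x with hh
  have hhc : Continuous h := hc.sub continuous_id
  have hper : ∀ x (m : ℤ), h (x + m) = h x := by
    intro x m; simp only [hh]; rw [lift_add_int hG1]; ring
  have hne : ∀ x, h x ≠ 0 := fun x hx => h0 x (by simpa [hh, sub_eq_zero] using hx)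
  -- constant sign
  have hsign : (∀ x, 0 < h x) ∨ (∀ x, h x < 0) := by
    by_contra hcon
    push_neg at hcon
    obtain ⟨⟨u, hu⟩, ⟨v, hv⟩⟩ := hcon
    have hu' : h u < 0 := lt_of_le_of_ne hu (hne u)
    have hv' : 0 < h v := lt_of_le_of_ne (by linarith) (Ne.symm (hne v))
    rcases le_total u v with huv | huv
    · obtain ⟨z, _, hz⟩ := intermediate_value_Icc huv hhc.continuousOn ⟨le_of_lt hu', le_of_lt hv'⟩
      exact hne z hz
    · obtain ⟨z, _, hz⟩ := intermediate_value_Icc' huv hhc.continuousOn ⟨le_of_lt hu', le_of_lt hv'⟩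
      exact hne z hz
  have key : ∀ x, h x = h (Int.fract x) := by
    intro x
    conv_lhs => rw [show x = Int.fract x + (⌊x⌋ : ℤ) from by
      rw [add_comm]; exact (Int.floor_add_fract x).symm]
    exact hper _ _
  obtain ⟨z, hz01, hzmin⟩ := (isCompact_Icc (a := (0:ℝ)) (b := 1)).exists_isMinOn
    (nonempty_Icc.2 zero_le_one) hhc.continuousOn
  obtain ⟨w, hw01, hwmax⟩ := (isCompact_Icc (a := (0:ℝ)) (b := 1)).exists_isMaxOn
    (nonempty_Icc.2 zero_le_one) hhc.continuousOn
  rcases hsign with hpos | hneg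
  · left
    refine ⟨h z, hpos z, fun x => ?_⟩
    have h1 : h z ≤ h (Int.fract x) := hzmin ⟨Int.fract_nonneg x, (Int.fract_lt_one x).le⟩
    have := key x
    simp only [hh] at this h1 ⊢
    linarith
  · right
    refine ⟨-h w, by linarith [hneg w], fun x => ?_⟩
    have h1 : h (Int.fract x) ≤ h w := hwmax ⟨Int.fract_nonneg x, (Int.fract_lt_one x).le⟩
    have := key x
    simp only [hh] at this h1 ⊢
    linarith

lemma iter_ge {G : ℝ → ℝ} {δ : ℝ} (h : ∀ x, x + δ ≤ G x) (n : ℕ) : (0:ℝ) + n * δ ≤ G^[n] 0 := by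
  induction n with
  | zero => simp
  | succ n ih =>
      rw [Function.iterate_succ_apply']
      have := h (G^[n] 0)
      push_cast
      nlinarith [h (G^[n] 0)]

lemma iter_le {G : ℝ → ℝ} {δ : ℝ} (h : ∀ x, G x ≤ x - δ) (n : ℕ) : G^[n] 0 ≤ (0:ℝ) - n * δ := by
  induction n with
  | zero => simp
  | succ n ih =>
      rw [Function.iterate_succ_apply']
      have := h (G^[n] 0)
      push_cast
      nlinarith [h (G^[n] 0)]

/-- Poincaré: continuous `G` commuting with `+1` with sublinear iterates has a fixed point. -/
lemma exists_fixed {G : ℝ → ℝ} (hc : Continuous G) (hG1 : ∀ x, G (x+1) = G x + 1)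
    (hlim : Tendsto (fun n : ℕ => G^[n] 0 / n) atTop (nhds 0)) : ∃ a, G a = a := by
  by_contra hno
  push_neg at hno
  rcases displacement hc hG1 hno with ⟨δ, hδ, hd⟩ | ⟨δ, hδ, hd⟩
  · have : ∀ᶠ n : ℕ in atTop, G^[n] 0 / n < δ := by
      have := hlim (Iio_mem_nhds hδ)
      simpa using this
    obtain ⟨n, hn1, hn2⟩ := (this.and (eventually_ge_atTop 1)).exists
    have h1 := iter_ge hd n
    have hnpos : (0:ℝ) < n := by exact_mod_cast hn2
    rw [div_lt_iff₀ hnpos] at hn1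
    nlinarith
  · have : ∀ᶠ n : ℕ in atTop, -δ < G^[n] 0 / n := by
      have := hlim (Ioi_mem_nhds (neg_lt_zero.2 hδ))
      simpa using this
    obtain ⟨n, hn1, hn2⟩ := (this.and (eventually_ge_atTop 1)).exists
    have h1 := iter_le hd n
    have hnpos : (0:ℝ) < n := by exact_mod_cast hn2
    rw [lt_div_iff₀ hnpos] at hn1
    nlinarith

-- coercion lemmas
lemma coe_int_add (x : ℝ) (m : ℤ) : ((x + m : ℝ) : UnitAddCircle) = (x : UnitAddCircle) := by
  have h0 : ((m : ℝ) : UnitAddCircle) = 0 :=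
    (QuotientAddGroup.eq_zero_iff _).2 ⟨m, by simp⟩
  have : ((x + m : ℝ) : UnitAddCircle) = (x : UnitAddCircle) + ((m : ℝ) : UnitAddCircle) := rfl
  rw [this, h0, add_zero]

lemma coe_eq_coe_iff {x y : ℝ} :
    (x : UnitAddCircle) = (y : UnitAddCircle) ↔ ∃ m : ℤ, x = y + m := by
  constructor
  · intro h
    rw [QuotientAddGroup.eq_iff_sub_mem] at h
    obtain ⟨m, hm⟩ := (AddSubgroup.mem_zmultiples_iff).1 h
    exact ⟨m, by simp at hm; linarith⟩
  · rintro ⟨m, rfl⟩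
    exact (coe_int_add y m)

lemma lift_surjective {F : ℝ → ℝ} {f : UnitAddCircle → UnitAddCircle} (hF : IsLiftOf F f)
    (hf : Function.Surjective f) : Function.Surjective F := by
  intro y
  obtain ⟨u, hu⟩ := hf (y : UnitAddCircle)
  obtain ⟨x, rfl⟩ := QuotientAddGroup.mk_surjective u
  rw [hF.2.2] at hu
  obtain ⟨m, hm⟩ := coe_eq_coe_iff.1 hu
  refine ⟨x + (-m : ℤ), ?_⟩
  rw [lift_add_int hF.2.1]
  push_cast
  linarith

lemma lift_continuous {F : ℝ → ℝ} {f : UnitAddCircle → UnitAddCircle} (hF : IsLiftOf F f)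
    (hf : Function.Surjective f) : Continuous F := by
  have h := (StrictMono.orderIsoOfSurjective F hF.1 (lift_surjective hF hf)).toHomeomorph.continuous
  rwa [show ⇑(StrictMono.orderIsoOfSurjective F hF.1 (lift_surjective hF hf)).toHomeomorph = F from rfl] at h

lemma iterate_lift {F : ℝ → ℝ} {f : UnitAddCircle → UnitAddCircle} (hF : IsLiftOf F f)
    (m : ℕ) (x : ℝ) : f^[m] (x : UnitAddCircle) = ((F^[m] x : ℝ) : UnitAddCircle) := by
  induction m generalizing x with
  | zero => simp
  | succ m ih =>
      rw [Function.iterate_succ_apply, Function.iterate_succ_apply, hF.2.2, ih]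

/-- If some lift satisfies `F^[q] = · + p`, then `f` is conjugate to a rotation. -/
lemma conj_of_periodic {f : UnitAddCircle → UnitAddCircle} {F : ℝ → ℝ}
    (hF : IsLiftOf F f) (hFc : Continuous F) {p : ℤ} {q : ℕ} (hq : 0 < q)
    (hFq : ∀ x, F^[q] x = x + p) : ConjToRotation f := by
  classical
  set ρ : ℝ := (p : ℝ) / q with hρdef
  set H : ℝ → ℝ := fun x => (∑ k ∈ Finset.range q, (F^[k] x - k * ρ)) / q with hHdef
  have hqR : (0:ℝ) < q := by exact_mod_cast hq
  have hFkmono : ∀ k : ℕ, StrictMono (F^[k]) := by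
    intro k; induction k with
    | zero => simpa using strictMono_id
    | succ k ih => rw [Function.iterate_succ']; exact hF.1.comp ih
  have hHmono : StrictMono H := by
    intro a b hab
    have hsum := Finset.sum_lt_sum_of_nonempty ⟨0, Finset.mem_range.2 hq⟩
      (fun k _ => by have := hFkmono k hab; show F^[k] a - k*ρ < F^[k] b - k*ρ; linarith)
    exact div_lt_div_of_pos_right hsum hqR
  have hH1 : ∀ x, H (x+1) = H x + 1 := by
    intro x
    have hterm : ∀ k ∈ Finset.range q, F^[k] (x+1) - k*ρ = (F^[k] x - k*ρ) + 1 := by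
      intro k _
      have h := iter_lift_add_int hF.2.1 k x 1
      push_cast at h
      rw [h]; ring
    simp only [hHdef]
    rw [Finset.sum_congr rfl hterm, Finset.sum_add_distrib, Finset.sum_const,
      Finset.card_range, nsmul_eq_mul, mul_one, add_div, div_self (ne_of_gt hqR)]
  have hHint : ∀ (x : ℝ) (m : ℤ), H (x + m) = H x + m := lift_add_int hH1
  have hHF : ∀ x, H (F x) = H x + ρ := by
    intro x
    have shift : ∀ k : ℕ, F^[k] (F x) = F^[k+1] x :=
      fun k => (Function.iterate_succ_apply F k x).symm
    have t0 := Finset.sum_range_succ (fun k => F^[k] x) q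
    have t0' := Finset.sum_range_succ' (fun k => F^[k] x) q
    have t1 : ∑ k ∈ Finset.range q, F^[k+1] x
        = (∑ k ∈ Finset.range q, F^[k] x) + F^[q] x - x := by
      have : ∑ k ∈ Finset.range q, F^[k+1] x = (∑ k ∈ Finset.range (q+1), F^[k] x) - F^[0] x := by
        rw [t0']; simp
      rw [this, t0]; simp
    have e1 : ∑ k ∈ Finset.range q, (F^[k] (F x) - k*ρ)
        = (∑ k ∈ Finset.range q, (F^[k] x - k*ρ)) + p := by
      simp only [shift]
      rw [Finset.sum_sub_distrib, Finset.sum_sub_distrib, t1, hFq x]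
      ring
    simp only [hHdef]
    rw [e1, add_div, hρdef]
  have hHc : Continuous H := by
    apply Continuous.div_const
    exact continuous_finset_sum _ (fun k _ => (hFc.iterate k).sub continuous_const)
  have htop : Tendsto H atTop atTop := by
    apply tendsto_atTop_mono (f := fun x : ℝ => H 0 + (x + (-1)))
    · intro x
      have h1 : H ((⌊x⌋ : ℤ) : ℝ) ≤ H x := hHmono.monotone (Int.floor_le x)
      have h2 : H ((⌊x⌋ : ℤ) : ℝ) = H 0 + ⌊x⌋ := by
        have := hHint 0 ⌊x⌋; rw [zero_add] at this; rw [this]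
      have := Int.sub_one_lt_floor x
      linarith
    · exact tendsto_atTop_add_const_left _ _ (tendsto_atTop_add_const_right _ _ tendsto_id)
  have hbot : Tendsto H atBot atBot := by
    apply tendsto_atBot_mono (f := fun x : ℝ => H 0 + (x + 1))
    · intro x
      have h1 : H x ≤ H ((⌈x⌉ : ℤ) : ℝ) := hHmono.monotone (Int.le_ceil x)
      have h2 : H ((⌈x⌉ : ℤ) : ℝ) = H 0 + ⌈x⌉ := by
        have := hHint 0 ⌈x⌉; rw [zero_add] at this; rw [this]
      have := Int.ceil_lt_add_one x
      linarith
    · exact tendsto_atBot_add_const_left _ _ (tendsto_atBot_add_const_right _ _ tendsto_id)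
  have hHsurj : Function.Surjective H := hHc.surjective htop hbot
  set Hiso : ℝ ≃o ℝ := StrictMono.orderIsoOfSurjective H hHmono hHsurj with hHiso
  have hco : ∀ x, Hiso x = H x := fun x => rfl
  have hsymmH : ∀ y, H (Hiso.symm y) = y := fun y => Hiso.apply_symm_apply y
  have hsymm1 : ∀ (y : ℝ) (m : ℤ), Hiso.symm (y + m) = Hiso.symm y + m := by
    intro y m
    apply hHmono.injective
    rw [hsymmH, hHint, hsymmH]
  have hsymmc : Continuous (Hiso.symm : ℝ → ℝ) := Hiso.symm.toHomeomorph.continuous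
  -- the circle maps
  set φ : UnitAddCircle → UnitAddCircle := AddCircle.liftIco 1 0 (fun r => ((H r : ℝ) : UnitAddCircle)) with hφdef
  set ψ : UnitAddCircle → UnitAddCircle := AddCircle.liftIco 1 0 (fun r => ((Hiso.symm r : ℝ) : UnitAddCircle)) with hψdef
  have hφcoe : ∀ x : ℝ, φ ((x : ℝ) : UnitAddCircle) = ((H x : ℝ) : UnitAddCircle) := by
    intro x
    have hfr : Int.fract x ∈ Ico (0:ℝ) (0 + 1) := by
      simp [Int.fract_nonneg, Int.fract_lt_one]
    have h1 : ((x : ℝ) : UnitAddCircle) = ((Int.fract x : ℝ) : UnitAddCircle) := by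
      conv_lhs => rw [show x = Int.fract x + (⌊x⌋ : ℤ) from by
        rw [add_comm]; exact (Int.floor_add_fract x).symm]
      exact coe_int_add _ _
    rw [h1, hφdef, AddCircle.liftIco_coe_apply hfr]
    have : H x = H (Int.fract x) + (⌊x⌋ : ℤ) := by
      conv_lhs => rw [show x = Int.fract x + (⌊x⌋ : ℤ) from by
        rw [add_comm]; exact (Int.floor_add_fract x).symm]
      exact hHint _ _
    rw [this, coe_int_add]
  have hψcoe : ∀ x : ℝ, ψ ((x : ℝ) : UnitAddCircle) = ((Hiso.symm x : ℝ) : UnitAddCircle) := by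
    intro x
    have hfr : Int.fract x ∈ Ico (0:ℝ) (0 + 1) := by
      simp [Int.fract_nonneg, Int.fract_lt_one]
    have h1 : ((x : ℝ) : UnitAddCircle) = ((Int.fract x : ℝ) : UnitAddCircle) := by
      conv_lhs => rw [show x = Int.fract x + (⌊x⌋ : ℤ) from by
        rw [add_comm]; exact (Int.floor_add_fract x).symm]
      exact coe_int_add _ _
    rw [h1, hψdef, AddCircle.liftIco_coe_apply hfr]
    have : Hiso.symm x = Hiso.symm (Int.fract x) + (⌊x⌋ : ℤ) := by
      conv_lhs => rw [show x = Int.fract x + (⌊x⌋ : ℤ) from by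
        rw [add_comm]; exact (Int.floor_add_fract x).symm]
      exact hsymm1 _ _
    rw [this, coe_int_add]
  have hφc : Continuous φ := by
    apply AddCircle.liftIco_continuous
    · show ((H 0 : ℝ) : UnitAddCircle) = ((H (0+1) : ℝ) : UnitAddCircle)
      have h := coe_int_add (H 0) 1
      push_cast at h
      rw [hH1, h]
    · exact (Continuous.comp (AddCircle.continuous_mk' 1) hHc).continuousOn
  have hψc : Continuous ψ := by
    apply AddCircle.liftIco_continuous
    · show ((Hiso.symm 0 : ℝ) : UnitAddCircle) = ((Hiso.symm (0+1) : ℝ) : UnitAddCircle)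
      have : Hiso.symm ((0:ℝ) + (1:ℤ)) = Hiso.symm 0 + (1:ℤ) := hsymm1 0 1
      push_cast at this
      rw [this]
      have := coe_int_add (Hiso.symm 0) 1
      push_cast at this
      rw [this]
    · exact (Continuous.comp (AddCircle.continuous_mk' 1) hsymmc).continuousOn
  have hψφ : ∀ x, ψ (φ x) = x := by
    intro x
    induction x using QuotientAddGroup.induction_on with
    | H r =>
        rw [hφcoe, hψcoe]
        congr 1
        have : H r = Hiso r := rfl
        rw [this, Hiso.symm_apply_apply]
  have hφψ : ∀ x, φ (ψ x) = x := by
    intro x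
    induction x using QuotientAddGroup.induction_on with
    | H r =>
        rw [hψcoe, hφcoe]
        congr 1
        exact hsymmH r
  refine ⟨⟨⟨φ, ψ, hψφ, hφψ⟩, hφc, hψc⟩, ((ρ : ℝ) : UnitAddCircle), ?_⟩
  intro x
  induction x using QuotientAddGroup.induction_on with
  | H r =>
      show φ (f (r : UnitAddCircle)) = φ (r : UnitAddCircle) + ((ρ : ℝ) : UnitAddCircle)
      rw [hF.2.2, hφcoe, hφcoe, hHF]
      rfl

-- new material
lemma G_iterate {F : ℝ → ℝ} (hF1 : ∀ x, F (x+1) = F x + 1) (q : ℕ) (p : ℤ) (n : ℕ) (x : ℝ) :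
    (fun y => F^[q] y - (p : ℝ))^[n] x = F^[q*n] x - (n : ℝ) * p := by
  induction n with
  | zero => simp
  | succ n ih =>
      rw [Function.iterate_succ_apply', ih]
      have h1 : F^[q*n] x - (n:ℝ)*p = F^[q*n] x + ((-(n*p) : ℤ) : ℝ) := by push_cast; ring
      rw [h1, iter_lift_add_int hF1 q]
      have h2 : q * (n+1) = q + q * n := by ring
      rw [h2, Function.iterate_add_apply]
      push_cast; ring
lemma G_tendsto {F : ℝ → ℝ} (hF1 : ∀ x, F (x+1) = F x + 1) {p : ℤ} {q : ℕ} (hq : 0 < q)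
    (hρ : Tendsto (fun n : ℕ => F^[n] 0 / n) atTop (nhds ((p:ℝ)/q))) :
    Tendsto (fun n : ℕ => (fun y => F^[q] y - (p:ℝ))^[n] 0 / n) atTop (nhds 0) := by
  have h1 : Tendsto (fun n : ℕ => q * n) atTop atTop := by
    apply tendsto_atTop_atTop.2
    exact fun b => ⟨b, fun n hn => le_trans hn (Nat.le_mul_of_pos_left n hq)⟩
  have h2 := hρ.comp h1
  have h3 : Tendsto (fun n : ℕ => (q:ℝ) * (F^[q*n] 0 / ((q*n : ℕ) : ℝ)) - p) atTop
      (nhds ((q:ℝ) * ((p:ℝ)/q) - p)) := ((h2.const_mul _).sub_const _)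
  have h4 : (q:ℝ) * ((p:ℝ)/q) - p = 0 := by
    field_simp
    ring
  rw [h4] at h3
  apply h3.congr'
  filter_upwards [eventually_ge_atTop 1] with n hn
  rw [G_iterate hF1 q p n 0]
  have hq' : (q:ℝ) ≠ 0 := by positivity
  have hn' : (n:ℝ) ≠ 0 := by
    have : (1:ℝ) ≤ n := by exact_mod_cast hn
    linarith
  push_cast
  field_simp
lemma iterate_strictMono {g : ℝ → ℝ} (h : StrictMono g) : ∀ k, StrictMono (g^[k]) := by
  intro k
  induction k with
  | zero => simpa using strictMono_id
  | succ j ih => rw [Function.iterate_succ']; exact h.comp ih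

lemma iterate_surjective {g : ℝ → ℝ} (h : Function.Surjective g) :
    ∀ k, Function.Surjective (g^[k]) := by
  intro k
  induction k with
  | zero => simpa using Function.surjective_id
  | succ j ih => rw [Function.iterate_succ']; exact h.comp ih

lemma image_uIcc_sm {g : ℝ → ℝ} (hm : StrictMono g) (hs : Function.Surjective g) (u v : ℝ) :
    g '' uIcc u v = uIcc (g u) (g v) := by
  rcases le_total u v with h | h
  · rw [uIcc_of_le h, uIcc_of_le (hm.monotone h)]
    exact (StrictMono.orderIsoOfSurjective g hm hs).image_Icc u v
  · rw [uIcc_of_ge h, uIcc_of_ge (hm.monotone h)]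
    exact (StrictMono.orderIsoOfSurjective g hm hs).image_Icc v u

lemma main_setup (f : UnitAddCircle ≃ₜ UnitAddCircle) (p : ℤ) (q : ℕ) (hq : 0 < q)
    (hρ : HasRotationNumber (f : UnitAddCircle → UnitAddCircle) ((p : ℝ) / q))
    (hnot : ¬ ConjToRotation (f : UnitAddCircle → UnitAddCircle)) :
    ∃ (T : ℤ → ℝ) (a b : ℝ),
      (StrictMono T ∨ StrictAnti T) ∧ (∀ i, a < T i ∧ T i < b) ∧ b ≤ a + 1 ∧
      (∀ (r s : ℤ) (m : ℕ), (f : UnitAddCircle → UnitAddCircle)^[q*m] ''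
          ((fun t : ℝ => (t : UnitAddCircle)) '' uIcc (T r) (T s))
        = (fun t : ℝ => (t : UnitAddCircle)) '' uIcc (T (r + m)) (T (s + m))) := by
  classical
  obtain ⟨F, hF, hten⟩ := hρ
  have hfs : Function.Surjective (f : UnitAddCircle → UnitAddCircle) := f.surjective
  have hFc : Continuous F := lift_continuous hF hfs
  have hFsurj : Function.Surjective F := lift_surjective hF hfs
  set G : ℝ → ℝ := fun y => F^[q] y - (p : ℝ) with hGdef
  have hGc : Continuous G := (hFc.iterate q).sub continuous_const
  have hFqmono : StrictMono (F^[q]) := iterate_strictMono hF.1 q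
  have hGmono : StrictMono G := by
    intro u v huv; have := hFqmono huv; simp only [hGdef]; linarith
  have hFqsurj : Function.Surjective (F^[q]) := iterate_surjective hFsurj q
  have hGsurj : Function.Surjective G := by
    intro y; obtain ⟨x, hx⟩ := hFqsurj (y + p); exact ⟨x, by simp [hGdef, hx]⟩
  have hG1 : ∀ x, G (x+1) = G x + 1 := by
    intro x
    have := iter_lift_add_int hF.2.1 q x 1
    push_cast at this
    simp only [hGdef]; rw [this]; ring
  have hGfix : ∃ a, G a = a := exists_fixed hGc hG1 (G_tendsto hF.2.1 hq hten)
  have hx₀ : ∃ x₀, G x₀ ≠ x₀ := by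
    by_contra hcon
    push_neg at hcon
    apply hnot
    apply conj_of_periodic hF hFc hq
    intro x
    have := hcon x
    simp only [hGdef] at this
    linarith
  obtain ⟨x₀, hx₀⟩ := hx₀
  -- nearest fixed points
  set Fix : Set ℝ := {x | G x = x} with hFixdef
  have hFixc : IsClosed Fix := isClosed_eq hGc continuous_id
  have hFixint : ∀ c ∈ Fix, ∀ m : ℤ, c + m ∈ Fix := by
    intro c hc m
    simp only [hFixdef, mem_setOf_eq] at hc ⊢
    have h2 := lift_add_int hG1 c m
    rw [h2, hc]
  obtain ⟨c, hc⟩ := hGfix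
  have hSa : (Fix ∩ Iic x₀).Nonempty := by
    refine ⟨c + (⌊x₀ - c⌋ : ℤ), hFixint c hc _, ?_⟩
    have := Int.floor_le (x₀ - c)
    simp only [mem_Iic]; linarith
  have hSabdd : BddAbove (Fix ∩ Iic x₀) := ⟨x₀, fun z hz => hz.2⟩
  set a := sSup (Fix ∩ Iic x₀) with hadef
  have haMem : a ∈ Fix ∩ Iic x₀ := (hFixc.inter isClosed_Iic).csSup_mem hSa hSabdd
  have haFix : G a = a := haMem.1
  have halt : a < x₀ := lt_of_le_of_ne haMem.2 (fun h => hx₀ (h ▸ haFix))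
  have ha1Fix : a + 1 ∈ Fix := by
    have := hFixint a haFix 1; push_cast at this; exact this
  have ha1x : x₀ ≤ a + 1 := by
    by_contra hcon
    push_neg at hcon
    have hmem : a + 1 ∈ Fix ∩ Iic x₀ := ⟨ha1Fix, le_of_lt hcon⟩
    have := le_csSup hSabdd hmem
    rw [← hadef] at this
    linarith
  have hSb : (Fix ∩ Ici x₀).Nonempty := ⟨a + 1, ha1Fix, ha1x⟩
  have hSbbdd : BddBelow (Fix ∩ Ici x₀) := ⟨x₀, fun z hz => hz.2⟩
  set b := sInf (Fix ∩ Ici x₀) with hbdef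
  have hbMem : b ∈ Fix ∩ Ici x₀ := (hFixc.inter isClosed_Ici).csInf_mem hSb hSbbdd
  have hbFix : G b = b := hbMem.1
  have hbgt : x₀ < b := lt_of_le_of_ne hbMem.2 (fun h => hx₀ (by rw [h]; exact hbFix))
  have hba : b ≤ a + 1 := csInf_le hSbbdd ⟨ha1Fix, ha1x⟩
  -- orbit
  set E : Equiv.Perm ℝ := (StrictMono.orderIsoOfSurjective G hGmono hGsurj).toEquiv with hEdef
  have hEcoe : ∀ x, E x = G x := fun x => rfl
  have hEsymm_fix : ∀ d, G d = d → E.symm d = d := by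
    intro d hd
    have : E d = d := by rw [hEcoe, hd]
    conv_lhs => rw [← this]
    exact E.symm_apply_apply d
  set T : ℤ → ℝ := fun i => (E ^ i) x₀ with hTdef
  have hT0 : T 0 = x₀ := rfl
  have hTsucc : ∀ i, T (i + 1) = G (T i) := by
    intro i
    have h1 : E ^ (i+1) = E * E ^ i := by rw [zpow_add_one]; exact ((Commute.refl E).zpow_right _).symm
    simp only [hTdef]
    rw [h1, Equiv.Perm.mul_apply, hEcoe]
  have hzpow_mono : ∀ i : ℤ, StrictMono ⇑(E ^ i) := by
    intro i
    induction i using Int.induction_on with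
    | zero => simpa using strictMono_id
    | succ k ih =>
        have h1 : E ^ ((k:ℤ)+1) = E * E ^ (k:ℤ) := by rw [zpow_add_one]; exact ((Commute.refl E).zpow_right _).symm
        rw [h1]
        intro u v huv
        simp only [Equiv.Perm.mul_apply, hEcoe]
        exact hGmono (ih huv)
    | pred k ih =>
        have h1 : E ^ (-(k:ℤ)-1) = E⁻¹ * E ^ (-(k:ℤ)) := by
          rw [sub_eq_add_neg, zpow_add, zpow_neg_one]; exact (((Commute.refl E).inv_left).zpow_right _).symm
        rw [h1]
        intro u v huv
        simp only [Equiv.Perm.mul_apply]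
        have hsymm_mono : StrictMono ⇑(E⁻¹) := by
          intro z w hzw
          exact (StrictMono.orderIsoOfSurjective G hGmono hGsurj).symm.strictMono hzw
        exact hsymm_mono (ih huv)
  have hfix_preserve : ∀ (i : ℤ) (d : ℝ), G d = d → (E ^ i) d = d := by
    intro i d hd
    induction i using Int.induction_on with
    | zero => simp
    | succ k ih =>
        have h1 : E ^ ((k:ℤ)+1) = E * E ^ (k:ℤ) := by rw [zpow_add_one]; exact ((Commute.refl E).zpow_right _).symm
        rw [h1, Equiv.Perm.mul_apply, ih, hEcoe, hd]
    | pred k ih =>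
        have h1 : E ^ (-(k:ℤ)-1) = E⁻¹ * E ^ (-(k:ℤ)) := by
          rw [sub_eq_add_neg, zpow_add, zpow_neg_one]; exact (((Commute.refl E).inv_left).zpow_right _).symm
        rw [h1, Equiv.Perm.mul_apply, ih]
        exact hEsymm_fix d hd
  have hTrange : ∀ i, a < T i ∧ T i < b := by
    intro i
    constructor
    · have := hzpow_mono i (show a < x₀ from halt)
      rwa [hfix_preserve i a haFix] at this
    · have := hzpow_mono i (show x₀ < b from hbgt)
      rwa [hfix_preserve i b hbFix] at this
  have hTmono : StrictMono T ∨ StrictAnti T := by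
    rcases lt_or_gt_of_ne hx₀ with hlt | hgt
    · right
      apply strictAnti_int_of_succ_lt
      intro i
      rw [hTsucc i]
      have : G (T i) = (E ^ i) (G x₀) := by
        simp only [hTdef]
        have h1 : E ^ (i+1) = E ^ i * E := by rw [zpow_add_one]
        have h2 : G (T i) = T (i+1) := (hTsucc i).symm
        rw [h2]
        simp only [hTdef]
        rw [h1, Equiv.Perm.mul_apply, hEcoe]
      rw [this]
      exact hzpow_mono i hlt
    · left
      apply strictMono_int_of_lt_succ
      intro i
      rw [hTsucc i]
      have : G (T i) = (E ^ i) (G x₀) := by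
        have h1 : E ^ (i+1) = E ^ i * E := by rw [zpow_add_one]
        have h2 : G (T i) = T (i+1) := (hTsucc i).symm
        rw [h2]
        simp only [hTdef]
        rw [h1, Equiv.Perm.mul_apply, hEcoe]
      rw [this]
      exact hzpow_mono i hgt
  -- image dynamics
  have hGiter_surj : ∀ m : ℕ, Function.Surjective (G^[m]) := by
    intro m
    induction m with
    | zero => simpa using Function.surjective_id
    | succ k ih => rw [Function.iterate_succ']; exact hGsurj.comp ih
  have hGiter_mono : ∀ m : ℕ, StrictMono (G^[m]) := by
    intro m
    induction m with
    | zero => simpa using strictMono_id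
    | succ k ih => rw [Function.iterate_succ']; exact hGmono.comp ih
  have hGiter_pow : ∀ (m : ℕ) (x : ℝ), G^[m] x = (E ^ (m:ℤ)) x := by
    intro m
    induction m with
    | zero => intro x; simp
    | succ k ih =>
        intro x
        rw [Function.iterate_succ_apply', ih]
        have h1 : E ^ ((k:ℤ)+1) = E * E ^ (k:ℤ) := by rw [zpow_add_one]; exact ((Commute.refl E).zpow_right _).symm
        push_cast
        rw [h1, Equiv.Perm.mul_apply, hEcoe]
  have hGiter_T : ∀ (m : ℕ) (r : ℤ), G^[m] (T r) = T (r + m) := by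
    intro m r
    rw [hGiter_pow]
    simp only [hTdef]
    rw [← Equiv.Perm.mul_apply, ← zpow_add]
    congr 1
    ring_nf
  have hFqm : ∀ (m : ℕ) (x : ℝ), F^[q*m] x = G^[m] x + (m:ℝ) * p := by
    intro m x
    have := G_iterate hF.2.1 q p m x
    simp only [← hGdef] at this
    linarith [this]
  have himg : ∀ (r s : ℤ) (m : ℕ), (f : UnitAddCircle → UnitAddCircle)^[q*m] ''
        ((fun t : ℝ => (t : UnitAddCircle)) '' uIcc (T r) (T s))
      = (fun t : ℝ => (t : UnitAddCircle)) '' uIcc (T (r + m)) (T (s + m)) := by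
    intro r s m
    rw [← Set.image_comp]
    have hcomp : ((f : UnitAddCircle → UnitAddCircle)^[q*m] ∘ fun t : ℝ => (t : UnitAddCircle))
        = fun t : ℝ => ((F^[q*m] t : ℝ) : UnitAddCircle) := by
      funext t
      exact iterate_lift hF (q*m) t
    rw [hcomp]
    have hcomp2 : (fun t : ℝ => ((F^[q*m] t : ℝ) : UnitAddCircle))
        = (fun t : ℝ => (t : UnitAddCircle)) ∘ (G^[m]) := by
      funext t
      have h1 := hFqm m t
      have h2 : ((m:ℝ) * p) = (((m * p : ℤ) : ℝ)) := by push_cast; ring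
      simp only [Function.comp_apply]
      rw [h1, h2, coe_int_add]
    rw [hcomp2, Set.image_comp, image_uIcc_sm (hGiter_mono m) (hGiter_surj m),
      hGiter_T, hGiter_T]
  exact ⟨T, a, b, hTmono, hTrange, hba, himg⟩

lemma circle_dist_le (x y : ℝ) : dist (x : UnitAddCircle) (y : UnitAddCircle) ≤ 1/2 := by
  have h : (x : UnitAddCircle) - (y : UnitAddCircle) = ((x - y : ℝ) : UnitAddCircle) := rfl
  rw [dist_eq_norm, h, UnitAddCircle.norm_eq]
  exact abs_sub_round _

lemma circle_dist_lower {x y δ Λ : ℝ} (h1 : δ ≤ |x - y|) (h2 : |x - y| ≤ Λ) (hΛ : Λ ≤ 1) :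
    min δ (1 - Λ) ≤ dist (x : UnitAddCircle) (y : UnitAddCircle) := by
  have h : (x : UnitAddCircle) - (y : UnitAddCircle) = ((x - y : ℝ) : UnitAddCircle) := rfl
  rw [dist_eq_norm, h, UnitAddCircle.norm_eq]
  set r := x - y
  set m := round r with hm
  rcases eq_or_ne m 0 with h0 | h0
  · rw [h0]
    push_cast
    rw [sub_zero]
    exact le_trans (min_le_left _ _) h1
  · have hm1 : (1:ℝ) ≤ |(m:ℝ)| := by
      have : (1:ℤ) ≤ |m| := Int.one_le_abs h0
      calc (1:ℝ) = ((1:ℤ):ℝ) := by norm_num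
        _ ≤ ((|m|:ℤ):ℝ) := by exact_mod_cast this
        _ = |(m:ℝ)| := by push_cast; ring
    have : |r - m| ≥ |(m:ℝ)| - |r| := by
      have := abs_sub_abs_le_abs_sub ((m:ℝ)) r
      have h3 : |(m:ℝ) - r| = |r - (m:ℝ)| := abs_sub_comm _ _
      linarith
    refine le_trans (min_le_right _ _) ?_
    linarith

lemma subcont_dist_eq {Y : Type*} [MetricSpace Y] (A B : Subcontinua Y) :
    dist A B = Metric.hausdorffDist (A.1 : Set Y) (B.1 : Set Y) := by
  change dist A.1 B.1 = _
  exact Metric.NonemptyCompacts.dist_eq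

lemma inducedC_iterate {X : Type*} [TopologicalSpace X] (f : X → X) (hf : Continuous f)
    (m : ℕ) (A : Subcontinua X) :
    (((inducedC f hf)^[m] A).1 : Set X) = f^[m] '' (A.1 : Set X) := by
  induction m with
  | zero => simp
  | succ k ih =>
      rw [Function.iterate_succ_apply']
      show f '' (((inducedC f hf)^[k] A).1 : Set X) = _
      rw [ih, ← Set.image_comp, ← Function.iterate_succ']

lemma subcont_dist_le_half (A B : Subcontinua UnitAddCircle) : dist A B ≤ 1/2 := by
  rw [subcont_dist_eq]
  apply Metric.hausdorffDist_le_of_mem_dist (by norm_num)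
  · intro x hx
    obtain ⟨y, hy⟩ := B.1.nonempty
    refine ⟨y, hy, ?_⟩
    obtain ⟨x', rfl⟩ := QuotientAddGroup.mk_surjective x
    obtain ⟨y', rfl⟩ := QuotientAddGroup.mk_surjective y
    exact circle_dist_le x' y'
  · intro y hy
    obtain ⟨x, hx⟩ := A.1.nonempty
    refine ⟨x, hx, ?_⟩
    obtain ⟨x', rfl⟩ := QuotientAddGroup.mk_surjective y
    obtain ⟨y', rfl⟩ := QuotientAddGroup.mk_surjective x
    exact circle_dist_le x' y'

lemma dynDist_self {X : Type*} [PseudoMetricSpace X] (f : X → X) (n : ℕ) (x : X) :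
    dynDist f n x x = 0 := by
  unfold dynDist
  have : ∀ k : ℕ, (⨆ _ : k ∈ Finset.range n, dist (f^[k] x) (f^[k] x)) = 0 := by
    intro k
    simp [dist_self]
  rw [funext this]
  simp [ciSup_const]

lemma le_dynDist {X : Type*} [PseudoMetricSpace X] {f : X → X} {n k : ℕ} (hk : k < n)
    {x y : X} {C : ℝ} (hbd : ∀ x' y' : X, dist x' y' ≤ C) {ε : ℝ}
    (h : ε ≤ dist (f^[k] x) (f^[k] y)) : ε ≤ dynDist f n x y := by
  unfold dynDist
  have hC0 : (0:ℝ) ≤ max C 0 := le_max_right _ _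
  have hbdd : BddAbove (Set.range fun j => ⨆ _ : j ∈ Finset.range n, dist (f^[j] x) (f^[j] y)) := by
    refine ⟨max C 0, ?_⟩
    rintro z ⟨j, rfl⟩
    exact Real.iSup_le (fun _ => le_trans (hbd _ _) (le_max_left _ _)) hC0
  have hterm : ε ≤ ⨆ _ : k ∈ Finset.range n, dist (f^[k] x) (f^[k] y) := by
    rw [ciSup_pos (Finset.mem_range.2 hk)]
    exact h
  exact le_trans hterm (le_ciSup hbdd k)

/-- Lower bound for Hausdorff distance via a witness point. -/
lemma hausdorff_lower {s t : Set UnitAddCircle} (hs : IsCompact s) (ht : IsCompact t)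
    (hsn : s.Nonempty) (htn : t.Nonempty) {z : UnitAddCircle} (hz : z ∈ s) {ε : ℝ}
    (h : ∀ w ∈ t, ε ≤ dist z w) : ε ≤ Metric.hausdorffDist s t := by
  have hfin : EMetric.hausdorffEdist s t ≠ ⊤ :=
    Metric.hausdorffEdist_ne_top_of_nonempty_of_bounded hsn htn hs.isBounded ht.isBounded
  have h1 : ε ≤ Metric.infDist z t := by
    by_contra hcon
    push_neg at hcon
    obtain ⟨w, hw, hw2⟩ := (Metric.infDist_lt_iff htn).1 hcon
    exact absurd (h w hw) (by linarith)
  exact le_trans h1 (Metric.infDist_le_hausdorffDist_of_mem hz hfin)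

noncomputable def arcSub (u v : ℝ) : Subcontinua UnitAddCircle :=
  ⟨⟨⟨(fun t : ℝ => (t : UnitAddCircle)) '' uIcc u v,
      isCompact_uIcc.image (AddCircle.continuous_mk' 1)⟩,
      nonempty_uIcc.image _⟩, by
    show IsConnected ((fun t : ℝ => (t : UnitAddCircle)) '' uIcc u v)
    rw [uIcc]
    exact (isConnected_Icc inf_le_sup).image _ (AddCircle.continuous_mk' 1).continuousOn⟩

lemma arcSub_coe (u v : ℝ) :
    ((arcSub u v).1 : Set UnitAddCircle) = (fun t : ℝ => (t : UnitAddCircle)) '' uIcc u v := rfl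

lemma dynDist_comm {X : Type*} [PseudoMetricSpace X] (f : X → X) (n : ℕ) (x y : X) :
    dynDist f n x y = dynDist f n y x := by
  unfold dynDist
  congr 1
  funext k
  congr 1
  funext hk
  exact dist_comm _ _

lemma core_sep (f : UnitAddCircle ≃ₜ UnitAddCircle) (q : ℕ) (hq : 0 < q)
    (T : ℤ → ℝ) (a b : ℝ)
    (hTmono : StrictMono T ∨ StrictAnti T)
    (hTrange : ∀ i, a < T i ∧ T i < b)
    (hba : b ≤ a + 1)
    (himg : ∀ (r s : ℤ) (m : ℕ), (f : UnitAddCircle → UnitAddCircle)^[q*m] ''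
          ((fun t : ℝ => (t : UnitAddCircle)) '' uIcc (T r) (T s))
        = (fun t : ℝ => (t : UnitAddCircle)) '' uIcc (T (r + m)) (T (s + m))) :
    ∃ ε > 0, ∀ N n : ℕ, q * (2*N+1) < n →
      ∀ i k j l : ℕ, N+1 ≤ i → i ≤ 2*N+1 → N+1 ≤ k → k ≤ 2*N+1 → j ≤ N → l ≤ N →
      (i,j) ≠ (k,l) →
      ε ≤ dynDist (inducedC (f : UnitAddCircle → UnitAddCircle) f.continuous) n
            (arcSub (T (-(i:ℤ))) (T (-(j:ℤ)))) (arcSub (T (-(k:ℤ))) (T (-(l:ℤ)))) := by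
  classical
  set P : ℝ → UnitAddCircle := fun t => (t : UnitAddCircle) with hP
  set δ : ℝ := |T 1 - T 0| with hδ
  set Λ : ℝ := max (max (b - T 0) (T 1 - a)) (max (T 0 - a) (b - T 1)) with hΛ
  set ε : ℝ := min δ (1 - Λ) with hε
  have hT0 := hTrange 0
  have hT1 := hTrange 1
  have hδpos : 0 < δ := by
    rw [hδ, abs_pos, sub_ne_zero]
    rcases hTmono with hm | hm
    · exact ne_of_gt (hm (show (0:ℤ) < 1 by norm_num))
    · exact ne_of_lt (hm (show (0:ℤ) < 1 by norm_num))
  have hΛ1 : Λ < 1 := by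
    rw [hΛ]
    simp only [max_lt_iff]
    refine ⟨⟨by linarith [hT0.1, hT0.2], by linarith [hT1.1, hT1.2]⟩,
      ⟨by linarith [hT0.1, hT0.2], by linarith [hT1.1, hT1.2]⟩⟩
  have hΛb1 : b - T 0 ≤ Λ := le_trans (le_max_left _ _) (le_max_left _ _)
  have hΛb2 : T 1 - a ≤ Λ := le_trans (le_max_right _ _) (le_max_left _ _)
  have hΛb3 : T 0 - a ≤ Λ := le_trans (le_max_left _ _) (le_max_right _ _)
  have hΛb4 : b - T 1 ≤ Λ := le_trans (le_max_right _ _) (le_max_right _ _)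
  have hεpos : 0 < ε := lt_min hδpos (by linarith)
  refine ⟨ε, hεpos, ?_⟩
  intro N n hn i k j l hi1 hi2 hk1 hk2 hj hl hne
  have harc : ∀ (r s : ℤ) (m : ℕ),
      ((((inducedC (f : UnitAddCircle → UnitAddCircle) f.continuous)^[q*m])
        (arcSub (T r) (T s))).1 : Set UnitAddCircle) = P '' uIcc (T (r+m)) (T (s+m)) := by
    intro r s m
    rw [inducedC_iterate, arcSub_coe, himg]
  have hdistm : ∀ (r s r' s' : ℤ) (m : ℕ),
      dist ((inducedC (f : UnitAddCircle → UnitAddCircle) f.continuous)^[q*m] (arcSub (T r) (T s)))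
        ((inducedC (f : UnitAddCircle → UnitAddCircle) f.continuous)^[q*m]
          (arcSub (T r') (T s')))
      = Metric.hausdorffDist (P '' uIcc (T (r+m)) (T (s+m))) (P '' uIcc (T (r'+m)) (T (s'+m))) := by
    intro r s r' s' m
    rw [subcont_dist_eq, harc, harc]
  -- far from T 0 : arcs with indices ≥ 1
  have W1 : ∀ (r s : ℤ), 1 ≤ r → 1 ≤ s →
      ∀ w ∈ P '' uIcc (T r) (T s), ε ≤ dist (P (T 0)) w := by
    intro r s hr hs w hw
    obtain ⟨t, ht, rfl⟩ := hw
    rw [hε]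
    rcases hTmono with hm | hm
    · have tlow : T 1 ≤ t := by
        rcases Set.mem_uIcc.1 ht with ⟨h1, _⟩ | ⟨h1, _⟩
        · exact le_trans (hm.monotone hr) h1
        · exact le_trans (hm.monotone hs) h1
      have thigh : t < b := by
        rcases Set.mem_uIcc.1 ht with ⟨_, h2⟩ | ⟨_, h2⟩
        · exact lt_of_le_of_lt h2 (hTrange s).2
        · exact lt_of_le_of_lt h2 (hTrange r).2
      have h01 : T 0 < T 1 := hm (by norm_num)
      apply circle_dist_lower (x := T 0) (y := t)
      · rw [hδ, abs_of_pos (by linarith), abs_of_neg (by linarith)]; linarith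
      · rw [abs_of_neg (by linarith)]; linarith
      · linarith
    · have tlow : a < t := by
        rcases Set.mem_uIcc.1 ht with ⟨h1, _⟩ | ⟨h1, _⟩
        · exact lt_of_lt_of_le (hTrange r).1 h1
        · exact lt_of_lt_of_le (hTrange s).1 h1
      have thigh : t ≤ T 1 := by
        rcases Set.mem_uIcc.1 ht with ⟨_, h2⟩ | ⟨_, h2⟩
        · exact le_trans h2 (hm.antitone hs)
        · exact le_trans h2 (hm.antitone hr)
      have h01 : T 1 < T 0 := hm (by norm_num)
      apply circle_dist_lower (x := T 0) (y := t)
      · rw [hδ, abs_of_neg (by linarith), abs_of_pos (by linarith)]; linarith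
      · rw [abs_of_pos (by linarith)]; linarith
      · linarith
  -- far from T 1 : arcs with indices ≤ 0
  have W2 : ∀ (r s : ℤ), r ≤ 0 → s ≤ 0 →
      ∀ w ∈ P '' uIcc (T r) (T s), ε ≤ dist (P (T 1)) w := by
    intro r s hr hs w hw
    obtain ⟨t, ht, rfl⟩ := hw
    rw [hε]
    rcases hTmono with hm | hm
    · have thigh : t ≤ T 0 := by
        rcases Set.mem_uIcc.1 ht with ⟨_, h2⟩ | ⟨_, h2⟩
        · exact le_trans h2 (hm.monotone hs)
        · exact le_trans h2 (hm.monotone hr)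
      have tlow : a < t := by
        rcases Set.mem_uIcc.1 ht with ⟨h1, _⟩ | ⟨h1, _⟩
        · exact lt_of_lt_of_le (hTrange r).1 h1
        · exact lt_of_lt_of_le (hTrange s).1 h1
      have h01 : T 0 < T 1 := hm (by norm_num)
      apply circle_dist_lower (x := T 1) (y := t)
      · rw [hδ, abs_of_pos (by linarith), abs_of_pos (by linarith)]; linarith
      · rw [abs_of_pos (by linarith)]; linarith
      · linarith
    · have tlow : T 0 ≤ t := by
        rcases Set.mem_uIcc.1 ht with ⟨h1, _⟩ | ⟨h1, _⟩
        · exact le_trans (hm.antitone hr) h1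
        · exact le_trans (hm.antitone hs) h1
      have thigh : t < b := by
        rcases Set.mem_uIcc.1 ht with ⟨_, h2⟩ | ⟨_, h2⟩
        · exact lt_of_le_of_lt h2 (hTrange s).2
        · exact lt_of_le_of_lt h2 (hTrange r).2
      have h01 : T 1 < T 0 := hm (by norm_num)
      apply circle_dist_lower (x := T 1) (y := t)
      · rw [hδ, abs_of_neg (by linarith), abs_of_neg (by linarith)]; linarith
      · rw [abs_of_neg (by linarith)]; linarith
      · linarith
  -- membership of witnesses
  have Wm1 : ∀ (r s : ℤ), r ≤ 0 → 1 ≤ s → P (T 1) ∈ P '' uIcc (T r) (T s) := by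
    intro r s hr hs
    apply Set.mem_image_of_mem
    rcases hTmono with hm | hm
    · exact Set.mem_uIcc.2 (Or.inl ⟨hm.monotone (by omega), hm.monotone hs⟩)
    · exact Set.mem_uIcc.2 (Or.inr ⟨hm.antitone hs, hm.antitone (by omega)⟩)
  have hcompact : ∀ u v : ℝ, IsCompact (P '' uIcc u v) :=
    fun u v => isCompact_uIcc.image (AddCircle.continuous_mk' 1)
  have hne' : ∀ u v : ℝ, (P '' uIcc u v).Nonempty := fun u v => nonempty_uIcc.image _
  -- case k < i
  have main_gt : ∀ i k j l : ℕ, N+1 ≤ i → i ≤ 2*N+1 → k ≤ 2*N+1 → j ≤ N → l ≤ N → k < i →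
      ε ≤ dynDist (inducedC (f : UnitAddCircle → UnitAddCircle) f.continuous) n
            (arcSub (T (-(i:ℤ))) (T (-(j:ℤ)))) (arcSub (T (-(k:ℤ))) (T (-(l:ℤ)))) := by
    intro i k j l hi1 hi2 hk2 hj hl hki
    have htime : q * i < n := lt_of_le_of_lt (Nat.mul_le_mul_left q hi2) hn
    apply le_dynDist htime subcont_dist_le_half
    rw [hdistm]
    apply hausdorff_lower (hcompact _ _) (hcompact _ _) (hne' _ _) (hne' _ _)
      (z := P (T (-(i:ℤ) + (i:ℕ))))
    · exact Set.mem_image_of_mem _ left_mem_uIcc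
    · have hz : (-(i:ℤ) + (i:ℕ)) = 0 := by omega
      rw [hz]
      apply W1 <;> omega
  -- case i = k, j < l
  have main_eq : ∀ i k j l : ℕ, N+1 ≤ i → i ≤ 2*N+1 → j ≤ N → l ≤ N → i = k → j < l →
      ε ≤ dynDist (inducedC (f : UnitAddCircle → UnitAddCircle) f.continuous) n
            (arcSub (T (-(i:ℤ))) (T (-(j:ℤ)))) (arcSub (T (-(k:ℤ))) (T (-(l:ℤ)))) := by
    intro i k j l hi1 hi2 hj hl hik hjl
    subst hik
    have htime : q * l < n := by
      have : l ≤ 2*N+1 := by omega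
      exact lt_of_le_of_lt (Nat.mul_le_mul_left q this) hn
    apply le_dynDist htime subcont_dist_le_half
    rw [hdistm]
    apply hausdorff_lower (hcompact _ _) (hcompact _ _) (hne' _ _) (hne' _ _)
      (z := P (T 1))
    · apply Wm1 <;> omega
    · apply W2 <;> omega
  rcases Nat.lt_trichotomy i k with hik | hik | hik
  · rw [dynDist_comm]
    exact main_gt k i l j hk1 hk2 hi2 hl hj hik
  · have hjl : j ≠ l := by
      intro h
      exact hne (by rw [hik, h])
    rcases Nat.lt_or_ge j l with h | h
    · exact main_eq i k j l hi1 hi2 hj hl hik h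
    · have h' : l < j := by omega
      rw [dynDist_comm]
      exact main_eq k i l j (by omega) (by omega) hl hj hik.symm h'
  · exact main_gt i k j l hi1 hi2 hk2 hj hl hik


lemma sep_bddAbove (g : Subcontinua UnitAddCircle → Subcontinua UnitAddCircle) (n : ℕ) {ε : ℝ}
    (hε : 0 < ε) :
    BddAbove {m | ∃ E : Finset (Subcontinua UnitAddCircle),
      ↑E ⊆ (Set.univ : Set (Subcontinua UnitAddCircle)) ∧ IsDynSeparated g n ε ↑E ∧ E.card = m} := by
  classical
  set Z := Fin n → NonemptyCompacts UnitAddCircle with hZ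
  set e : Subcontinua UnitAddCircle → Z := fun A => fun i => (g^[(i:ℕ)] A).1 with he
  obtain ⟨t, -, htfin, hcov⟩ :=
    (isCompact_univ (X := Z)).finite_cover_balls (half_pos hε)
  refine ⟨htfin.toFinset.card, ?_⟩
  rintro m ⟨E, -, hsepE, rfl⟩
  have hcov' : ∀ A, ∃ z ∈ t, e A ∈ Metric.ball z (ε/2) := by
    intro A
    have := hcov (Set.mem_univ (e A))
    simpa using this
  choose ctr hctr hball using hcov'
  apply Finset.card_le_card_of_injOn ctr (fun A _ => htfin.mem_toFinset.2 (hctr A))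
  intro A hA B hB hAB
  by_contra hne
  have hsep := hsepE A hA B hB hne
  have hcA : dist (e A) (ctr A) < ε/2 := by
    have := hball A; rwa [Metric.mem_ball] at this
  have hcB : dist (e B) (ctr B) < ε/2 := by
    have := hball B; rwa [Metric.mem_ball] at this
  set c : ℝ := dist (e A) (ctr A) + dist (e B) (ctr B) with hcdef
  have hc0 : 0 ≤ c := by positivity
  have hbound : dynDist g n A B ≤ c := by
    unfold dynDist
    apply Real.iSup_le _ hc0
    intro j
    apply Real.iSup_le _ hc0
    intro hj
    have hjn : j < n := Finset.mem_range.1 hj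
    have h1 : dist (g^[j] A) (g^[j] B) = dist (e A ⟨j, hjn⟩) (e B ⟨j, hjn⟩) := rfl
    rw [h1]
    calc dist (e A ⟨j, hjn⟩) (e B ⟨j, hjn⟩)
        ≤ dist (e A ⟨j, hjn⟩) (ctr A ⟨j, hjn⟩) + dist (ctr A ⟨j, hjn⟩) (e B ⟨j, hjn⟩) :=
          dist_triangle _ _ _
      _ = dist (e A ⟨j, hjn⟩) (ctr A ⟨j, hjn⟩) + dist (ctr B ⟨j, hjn⟩) (e B ⟨j, hjn⟩) := by
          rw [hAB]
      _ = dist (e A ⟨j, hjn⟩) (ctr A ⟨j, hjn⟩) + dist (e B ⟨j, hjn⟩) (ctr B ⟨j, hjn⟩) := by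
          rw [dist_comm (ctr B _)]
      _ ≤ c := by
          rw [hcdef]
          exact add_le_add (dist_le_pi_dist _ _ _) (dist_le_pi_dist _ _ _)
  linarith

end Stmt11

/-- an orientation-preserving circle homeomorphism with rational
rotation number, not conjugate to a rotation, has `h_pol(C(f)) ≥ 2`. -/
theorem stmt_11 (f : UnitAddCircle ≃ₜ UnitAddCircle) (p : ℤ) (q : ℕ) (hq : 0 < q)
    (hρ : HasRotationNumber (f : UnitAddCircle → UnitAddCircle) ((p : ℝ) / q))
    (hnot : ¬ ConjToRotation (f : UnitAddCircle → UnitAddCircle)) :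
    2 ≤ hpol (inducedC (f : UnitAddCircle → UnitAddCircle) f.continuous) := by
  classical
  obtain ⟨T, a, b, hTmono, hTrange, hba, himg⟩ := Stmt11.main_setup f p q hq hρ hnot
  obtain ⟨ε, hεpos, hsep⟩ := Stmt11.core_sep f q hq T a b hTmono hTrange hba himg
  set CF := inducedC (f : UnitAddCircle → UnitAddCircle) f.continuous with hCF
  set φ : ℕ → ℕ := fun N => q*(2*N+1)+1 with hφdef
  -- sepCount lower bound along the subsequence φ
  have hsc : ∀ N : ℕ, ((N+1)^2 : ℕ) ≤ sepCount CF Set.univ (φ N) ε := by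
    intro N
    set n := φ N with hn
    have hnlt : q*(2*N+1) < n := by
      have hh : n = q*(2*N+1)+1 := rfl
      omega
    set Φ : ℕ × ℕ → Subcontinua UnitAddCircle :=
      fun pr => Stmt11.arcSub (T (-(pr.1:ℤ))) (T (-(pr.2:ℤ))) with hΦ
    set Idx := (Finset.Icc (N+1) (2*N+1)) ×ˢ (Finset.range (N+1)) with hIdx
    have hmem : ∀ pr ∈ Idx, N+1 ≤ pr.1 ∧ pr.1 ≤ 2*N+1 ∧ pr.2 ≤ N := by
      intro pr hpr
      rw [hIdx, Finset.mem_product, Finset.mem_Icc, Finset.mem_range] at hpr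
      omega
    have hsep' : ∀ p1 ∈ Idx, ∀ p2 ∈ Idx, p1 ≠ p2 → ε ≤ dynDist CF n (Φ p1) (Φ p2) := by
      intro p1 h1 p2 h2 hne12
      obtain ⟨a1, b1, c1⟩ := hmem p1 h1
      obtain ⟨a2, b2, c2⟩ := hmem p2 h2
      refine hsep N n hnlt p1.1 p2.1 p1.2 p2.2 a1 b1 a2 b2 c1 c2 ?_
      intro hcon
      apply hne12
      have h1 := congrArg Prod.fst hcon
      have h2 := congrArg Prod.snd hcon
      simp at h1 h2
      exact Prod.ext h1 h2
    have hinj : Set.InjOn Φ ↑Idx := by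
      intro p1 h1 p2 h2 heq
      by_contra hne12
      have hd := hsep' p1 h1 p2 h2 hne12
      rw [heq, Stmt11.dynDist_self] at hd
      linarith
    set E := Idx.image Φ with hE
    have hcard : E.card = (N+1)^2 := by
      rw [hE, Finset.card_image_of_injOn hinj, hIdx, Finset.card_product,
        Nat.card_Icc, Finset.card_range]
      have h1 : 2*N+1+1 - (N+1) = N+1 := by omega
      rw [h1, pow_two]
    have hsepE : IsDynSeparated CF n ε ↑E := by
      intro x hx y hy hxy
      obtain ⟨p1, hp1, rfl⟩ := Finset.mem_image.1 (by exact_mod_cast hx)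
      obtain ⟨p2, hp2, rfl⟩ := Finset.mem_image.1 (by exact_mod_cast hy)
      exact hsep' p1 hp1 p2 hp2 (fun h => hxy (by rw [h]))
    apply le_csSup (Stmt11.sep_bddAbove CF n hεpos)
    exact ⟨E, Set.subset_univ _, hsepE, hcard⟩
  -- analysis of the limsup
  set u : ℕ → EReal := fun n =>
    ((Real.log (sepCount CF Set.univ n ε) / Real.log n : ℝ) : EReal) with hu
  have hφmono : StrictMono φ := by
    apply strictMono_nat_of_lt_succ
    intro N
    show q*(2*N+1)+1 < q*(2*(N+1)+1)+1
    have h1 : q*(2*(N+1)+1) = q*(2*N+1) + 2*q := by ring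
    omega
  -- real sequence limits
  set x : ℕ → ℝ := fun N => Real.log ((N:ℝ)+1) with hx
  have hxto : Filter.Tendsto x Filter.atTop Filter.atTop := by
    apply Real.tendsto_log_atTop.comp
    exact Filter.tendsto_atTop_add_const_right _ 1 tendsto_natCast_atTop_atTop
  set C : ℝ := Real.log (3*q) with hCdef
  have hq1 : (1:ℝ) ≤ q := by exact_mod_cast hq
  have hC0 : 0 < C := by
    rw [hCdef]
    apply Real.log_pos
    linarith
  set w : ℕ → ℝ := fun N => Real.log (((N:ℝ)+1)^2) / Real.log ((φ N : ℕ) : ℝ) with hw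
  have hφcast : ∀ N, ((φ N : ℕ) : ℝ) = q*(2*N+1)+1 := by
    intro N
    rw [hφdef]
    push_cast
    ring
  have hφlogpos : ∀ N : ℕ, 1 ≤ N → 0 < Real.log ((φ N : ℕ) : ℝ) := by
    intro N hN
    apply Real.log_pos
    rw [hφcast]
    have : (1:ℝ) ≤ N := by exact_mod_cast hN
    nlinarith
  have hxpos : ∀ N : ℕ, 1 ≤ N → 0 < x N := by
    intro N hN
    apply Real.log_pos
    have : (1:ℝ) ≤ N := by exact_mod_cast hN
    linarith
  have hwto : Filter.Tendsto w Filter.atTop (nhds 2) := by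
    have hlowto : Filter.Tendsto (fun N : ℕ => 2/(1 + C / x N)) Filter.atTop (nhds 2) := by
      have hCx : Filter.Tendsto (fun N : ℕ => C / x N) Filter.atTop (nhds 0) :=
        Filter.Tendsto.div_atTop tendsto_const_nhds hxto
      have := Filter.Tendsto.div (tendsto_const_nhds (x := (2:ℝ)))
        ((tendsto_const_nhds (x := (1:ℝ))).add hCx) (by norm_num)
      have e : (2:ℝ) / (1 + 0) = 2 := by norm_num
      rw [e] at this
      exact this
    apply tendsto_of_tendsto_of_tendsto_of_le_of_le' hlowto tendsto_const_nhds
    · filter_upwards [Filter.eventually_ge_atTop 1] with N hN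
      have hxN := hxpos N hN
      have hlogφ := hφlogpos N hN
      have hub : Real.log ((φ N : ℕ) : ℝ) ≤ x N + C := by
        have h1 : ((φ N : ℕ) : ℝ) ≤ 3*q*((N:ℝ)+1) := by
          rw [hφcast]
          nlinarith
        have h2 : x N + C = Real.log (3*q*((N:ℝ)+1)) := by
          rw [hCdef, hx]
          rw [← Real.log_mul (by positivity) (by positivity)]
          ring_nf
        rw [h2]
        apply Real.log_le_log (by rw [hφcast]; positivity) h1
      have hnum : Real.log (((N:ℝ)+1)^2) = 2 * x N := by
        rw [hx, Real.log_pow]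
        push_cast
        ring
      rw [hw]
      simp only
      rw [hnum]
      have e1 : 2/(1 + C / x N) = 2 * x N / (x N + C) := by
        rw [div_eq_div_iff (by positivity) (by positivity)]
        field_simp
      rw [e1]
      exact div_le_div_of_nonneg_left (by positivity) hlogφ hub
    · filter_upwards [Filter.eventually_ge_atTop 1] with N hN
      have hxN := hxpos N hN
      have hlogφ := hφlogpos N hN
      have hlb : x N ≤ Real.log ((φ N : ℕ) : ℝ) := by
        apply Real.log_le_log (by positivity)
        rw [hφcast]
        nlinarith
      have hnum : Real.log (((N:ℝ)+1)^2) = 2 * x N := by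
        rw [hx, Real.log_pow]
        push_cast
        ring
      rw [hw]
      simp only
      rw [hnum, div_le_iff₀ hlogφ]
      nlinarith [hlb, hxN]
  -- eventual comparison on the subsequence
  have hwle : ∀ᶠ N in Filter.atTop, ((w N : ℝ) : EReal) ≤ (u ∘ φ) N := by
    filter_upwards [Filter.eventually_ge_atTop 1] with N hN
    have hlogφ := hφlogpos N hN
    have hnum : Real.log (((N:ℝ)+1)^2)
        ≤ Real.log ((sepCount CF Set.univ (φ N) ε : ℕ) : ℝ) := by
      apply Real.log_le_log (by positivity)
      have hcast : (((N+1)^2 : ℕ) : ℝ) ≤ ((sepCount CF Set.univ (φ N) ε : ℕ) : ℝ) := by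
        exact_mod_cast hsc N
      push_cast at hcast ⊢
      linarith
    rw [hu]
    simp only [Function.comp_apply]
    rw [EReal.coe_le_coe_iff]
    rw [hw]
    simp only
    exact (div_le_div_iff_of_pos_right hlogφ).2 hnum
  -- conclude
  have hliminfw : Filter.liminf (fun N => ((w N : ℝ) : EReal)) Filter.atTop = ((2:ℝ) : EReal) :=
    Filter.Tendsto.liminf_eq ((continuous_coe_real_ereal.tendsto 2).comp hwto)
  have h3 : ((2:ℝ) : EReal) ≤ Filter.liminf (u ∘ φ) Filter.atTop := by
    rw [← hliminfw]
    exact Filter.liminf_le_liminf hwle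
  have h4 : Filter.liminf (u ∘ φ) Filter.atTop ≤ Filter.limsup (u ∘ φ) Filter.atTop :=
    Filter.liminf_le_limsup
  have h5 : Filter.limsup (u ∘ φ) Filter.atTop ≤ Filter.limsup u Filter.atTop := by
    rw [Filter.limsup_comp]
    exact Filter.limsup_le_limsup_of_le hφmono.tendsto_atTop
  have hfinal : ((2:ℝ) : EReal) ≤ Filter.limsup u Filter.atTop :=
    le_trans h3 (le_trans h4 h5)
  have h2e : (2 : EReal) = ((2:ℝ) : EReal) := by norm_cast
  show (2 : EReal) ≤ hpolOn CF Set.univ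
  unfold hpolOn
  refine le_trans ?_ (le_iSup (fun ε' : {ε : ℝ // 0 < ε} =>
    Filter.limsup (fun n : ℕ =>
      ((Real.log (sepCount CF Set.univ n ε') / Real.log n : ℝ) : EReal)) Filter.atTop)
    (⟨ε, hεpos⟩ : {ε : ℝ // 0 < ε}))
  rw [h2e]
  exact hfinal
end

section
/- Let f : S¹ → S¹ be an orientation-preserving homeomorphism with irrational rotation number whose non-wandering set NW(f) is a Cantor set. Then h_pol(f; NW(f)) = 1. -/
open Filter TopologicalSpace Set

section Stmt12Aux
open Function

namespace Stmt12

lemma coe_int_eq_zero (k : ℤ) : ((k : ℝ) : UnitAddCircle) = 0 := by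
  rw [AddCircle.coe_eq_zero_iff]
  exact ⟨k, by simp⟩

lemma coe_eq_coe_iff {s t : ℝ} :
    (s : UnitAddCircle) = (t : UnitAddCircle) ↔ ∃ k : ℤ, s = t + k := by
  constructor
  · intro h
    have h2 : ((s - t : ℝ) : UnitAddCircle) = 0 := by rw [AddCircle.coe_sub, h, sub_self]
    rw [AddCircle.coe_eq_zero_iff] at h2
    obtain ⟨k, hk⟩ := h2
    refine ⟨k, ?_⟩
    have : (k : ℝ) * 1 = s - t := by simpa [zsmul_eq_mul] using hk
    linarith
  · rintro ⟨k, rfl⟩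
    rw [AddCircle.coe_add, coe_int_eq_zero, add_zero]

lemma dist_le_one (x y : UnitAddCircle) : dist x y ≤ 1 := by
  rw [dist_eq_norm]
  obtain ⟨b, hb, hbe⟩ := AddCircle.eq_coe_Ico (x - y)
  rw [← hbe, UnitAddCircle.norm_eq]
  have := abs_sub_round b
  linarith

lemma exists_signed_rep (u : UnitAddCircle) : ∃ t : ℝ, u = (t : UnitAddCircle) ∧ |t| = ‖u‖ := by
  obtain ⟨b, hb, hbe⟩ := AddCircle.eq_coe_Ico u
  refine ⟨b - round b, ?_, by rw [← hbe, UnitAddCircle.norm_eq]⟩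
  rw [← hbe, eq_comm]
  rw [AddCircle.coe_sub, coe_int_eq_zero, sub_zero]

/-! ### dynDist -/

lemma dynDist_le {g : UnitAddCircle → UnitAddCircle} {n : ℕ} {x y : UnitAddCircle} {c : ℝ}
    (hc : 0 ≤ c) (h : ∀ k < n, dist (g^[k] x) (g^[k] y) ≤ c) : dynDist g n x y ≤ c :=
  Real.iSup_le (fun k => Real.iSup_le (fun hk => h k (Finset.mem_range.1 hk)) hc) hc

lemma le_dynDist {g : UnitAddCircle → UnitAddCircle} {n : ℕ} {x y : UnitAddCircle} {k : ℕ}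
    (hk : k < n) : dist (g^[k] x) (g^[k] y) ≤ dynDist g n x y := by
  have bdd : BddAbove (Set.range fun j : ℕ =>
      ⨆ _ : j ∈ Finset.range n, dist (g^[j] x) (g^[j] y)) := by
    refine ⟨1, ?_⟩
    rintro _ ⟨j, rfl⟩
    exact Real.iSup_le (fun _ => dist_le_one _ _) zero_le_one
  refine le_trans ?_ (le_ciSup bdd k)
  have hk' : k ∈ Finset.range n := Finset.mem_range.2 hk
  exact le_ciSup_of_le ⟨dist (g^[k] x) (g^[k] y), by rintro _ ⟨h', rfl⟩; exact le_rfl⟩ hk' le_rfl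

lemma dynDist_comm {g : UnitAddCircle → UnitAddCircle} (n : ℕ) (x y : UnitAddCircle) :
    dynDist g n x y = dynDist g n y x := by
  unfold dynDist
  simp_rw [dist_comm]

lemma exists_dist_of_le_dynDist {g : UnitAddCircle → UnitAddCircle} {n : ℕ}
    {x y : UnitAddCircle} {ε : ℝ} (hε : 0 < ε) (h : ε ≤ dynDist g n x y) :
    ∃ k < n, ε ≤ dist (g^[k] x) (g^[k] y) := by
  by_contra hcon
  push_neg at hcon
  rcases Nat.eq_zero_or_pos n with hn | hn
  · subst hn
    have : dynDist g 0 x y ≤ 0 := dynDist_le le_rfl (by omega)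
    linarith
  · have hne : (Finset.range n).Nonempty := ⟨0, Finset.mem_range.2 hn⟩
    set c := (Finset.range n).sup' hne (fun k => dist (g^[k] x) (g^[k] y)) with hc
    have hc0 : 0 ≤ c := le_trans dist_nonneg (Finset.le_sup' (f := fun k => dist (g^[k] x) (g^[k] y)) (Finset.mem_range.2 hn))
    have hcε : c < ε := by
      rw [hc, Finset.sup'_lt_iff]
      exact fun k hk => hcon k (Finset.mem_range.1 hk)
    have : dynDist g n x y ≤ c :=
      dynDist_le hc0 (fun k hk => Finset.le_sup' (f := fun k => dist (g^[k] x) (g^[k] y)) (Finset.mem_range.2 hk))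
    linarith

end Stmt12
end Stmt12Aux
section Stmt12Aux2
open Function CircleDeg1Lift

namespace Stmt12

variable {f : UnitAddCircle ≃ₜ UnitAddCircle} {F : ℝ → ℝ} {ρ : ℝ}

lemma lift_iterate (hF : IsLiftOf F ⇑f) (n : ℕ) (x : ℝ) :
    (⇑f)^[n] (x : UnitAddCircle) = ((F^[n] x : ℝ) : UnitAddCircle) := by
  induction n with
  | zero => simp
  | succ n ih => rw [iterate_succ_apply', ih, hF.2.2 (F^[n] x), iterate_succ_apply']

/-- The lift as a `CircleDeg1Lift`. -/
def toC1 (hF : IsLiftOf F ⇑f) : CircleDeg1Lift := ⟨⟨F, hF.1.monotone⟩, hF.2.1⟩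

@[simp] lemma toC1_coe (hF : IsLiftOf F ⇑f) : ⇑(toC1 hF) = F := rfl

lemma lift_surjective (hF : IsLiftOf F ⇑f) : Surjective F := by
  intro y
  obtain ⟨u, hu⟩ := f.surjective ((y : ℝ) : UnitAddCircle)
  obtain ⟨x, hx01, hxu⟩ := AddCircle.eq_coe_Ico u
  have h1 : ((F x : ℝ) : UnitAddCircle) = (y : UnitAddCircle) := by
    rw [← hF.2.2, hxu, hu]
  obtain ⟨k, hk⟩ := coe_eq_coe_iff.1 h1
  refine ⟨x - k, ?_⟩
  have := (toC1 hF).map_sub_int x k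
  rw [toC1_coe] at this
  rw [this, hk]; ring

lemma lift_isUnit (hF : IsLiftOf F ⇑f) : IsUnit (toC1 hF) :=
  isUnit_iff_bijective.2 ⟨hF.1.injective, lift_surjective hF⟩

lemma lift_tau (hF : IsLiftOf F ⇑f)
    (ht : Filter.Tendsto (fun n : ℕ => F^[n] 0 / n) Filter.atTop (nhds ρ)) :
    translationNumber (toC1 hF) = ρ :=
  translationNumber_eq_of_tendsto₀ _ (by simpa using ht)

lemma lift_no_per (hF : IsLiftOf F ⇑f)
    (ht : Filter.Tendsto (fun n : ℕ => F^[n] 0 / n) Filter.atTop (nhds ρ))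
    (hirr : Irrational ρ) {m : ℕ} (hm : 0 < m) (x : UnitAddCircle) : (⇑f)^[m] x ≠ x := by
  intro hx
  obtain ⟨r, hr, hrx⟩ := AddCircle.eq_coe_Ico x
  have h1 : ((F^[m] r : ℝ) : UnitAddCircle) = ((r : ℝ) : UnitAddCircle) := by
    rw [← lift_iterate hF, hrx, hx]
  obtain ⟨k, hk⟩ := coe_eq_coe_iff.1 h1
  have h2 : (toC1 hF ^ m) r = r + k := by rw [coe_pow]; simpa using hk
  have h3 := translationNumber_of_map_pow_eq_add_int _ h2 hm
  rw [lift_tau hF ht] at h3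
  exact hirr ⟨(k : ℚ) / (m : ℚ), by push_cast; rw [h3]⟩

end Stmt12
end Stmt12Aux2
section Stmt12Aux3
open Function CircleDeg1Lift

namespace Stmt12

variable {f : UnitAddCircle ≃ₜ UnitAddCircle} {F : ℝ → ℝ} {ρ : ℝ}

lemma real_ciSup_add {ι : Type*} [Nonempty ι] (g : ι → ℝ) (h : BddAbove (Set.range g)) (c : ℝ) :
    (⨆ i, (g i + c)) = (⨆ i, g i) + c := by
  obtain ⟨B, hB⟩ := h
  have h' : BddAbove (Set.range fun i => g i + c) := by
    refine ⟨B + c, ?_⟩; rintro _ ⟨i, rfl⟩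
    exact add_le_add_left (hB ⟨i, rfl⟩) c
  refine le_antisymm (ciSup_le fun i => add_le_add_left (le_ciSup ⟨B, hB⟩ i) c) ?_
  rw [← le_sub_iff_add_le]
  refine ciSup_le fun i => ?_
  rw [le_sub_iff_add_le]
  exact le_ciSup h' i

/-- The degree-one lift as a unit. -/
noncomputable def liftUnit (hF : IsLiftOf F ⇑f) : CircleDeg1Liftˣ := (lift_isUnit hF).unit

/-- Integer iterates of the lift. -/
noncomputable def Pz (hF : IsLiftOf F ⇑f) (n : ℤ) : ℝ → ℝ :=
  ⇑((liftUnit hF ^ n : CircleDeg1Liftˣ) : CircleDeg1Lift)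

lemma Pz_add (hF : IsLiftOf F ⇑f) (a b : ℤ) (x : ℝ) :
    Pz hF (a + b) x = Pz hF a (Pz hF b x) := by
  unfold Pz
  rw [zpow_add, Units.val_mul, mul_apply]

lemma Pz_one (hF : IsLiftOf F ⇑f) (x : ℝ) : Pz hF 1 x = F x := by
  unfold Pz liftUnit
  rw [zpow_one, (lift_isUnit hF).unit_spec, toC1_coe]

lemma Pz_succ (hF : IsLiftOf F ⇑f) (n : ℤ) (x : ℝ) :
    Pz hF (n + 1) x = F (Pz hF n x) := by
  rw [add_comm, Pz_add, Pz_one]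

lemma Pz_add_int (hF : IsLiftOf F ⇑f) (n k : ℤ) (x : ℝ) :
    Pz hF n (x + k) = Pz hF n x + k :=
  CircleDeg1Lift.map_add_int _ x k

lemma Pz_nat (hF : IsLiftOf F ⇑f) (m : ℕ) (x : ℝ) : Pz hF (m : ℤ) x = F^[m] x := by
  induction m with
  | zero => rfl
  | succ m ih =>
    rw [iterate_succ_apply', ← ih,
      show ((m + 1 : ℕ) : ℤ) = (m : ℤ) + 1 by push_cast; ring, Pz_succ]

lemma Pz_tau (hF : IsLiftOf F ⇑f)
    (ht : Filter.Tendsto (fun n : ℕ => F^[n] 0 / n) Filter.atTop (nhds ρ)) (n : ℤ) :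
    translationNumber ((liftUnit hF ^ n : CircleDeg1Liftˣ) : CircleDeg1Lift) = n * ρ := by
  rw [translationNumber_zpow]
  congr 1
  show translationNumber ((liftUnit hF : CircleDeg1Liftˣ) : CircleDeg1Lift) = ρ
  unfold liftUnit
  rw [(lift_isUnit hF).unit_spec, lift_tau hF ht]

lemma star_lt (hF : IsLiftOf F ⇑f)
    (ht : Filter.Tendsto (fun n : ℕ => F^[n] 0 / n) Filter.atTop (nhds ρ))
    {n k : ℤ} (h : (n : ℝ) * ρ < k) (y : ℝ) : Pz hF n y < y + k := by
  have h' : translationNumber ((liftUnit hF ^ n : CircleDeg1Liftˣ) : CircleDeg1Lift) < (k : ℝ) := by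
    rw [Pz_tau hF ht]; exact h
  exact CircleDeg1Lift.map_lt_of_translationNumber_lt_int _ h' y

lemma star_gt (hF : IsLiftOf F ⇑f)
    (ht : Filter.Tendsto (fun n : ℕ => F^[n] 0 / n) Filter.atTop (nhds ρ))
    {n k : ℤ} (h : (k : ℝ) < n * ρ) (y : ℝ) : y + k < Pz hF n y := by
  have h' : (k : ℝ) < translationNumber ((liftUnit hF ^ n : CircleDeg1Liftˣ) : CircleDeg1Lift) := by
    rw [Pz_tau hF ht]; exact h
  exact CircleDeg1Lift.lt_map_of_int_lt_translationNumber _ h' y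

lemma Pz_zero_lb (hF : IsLiftOf F ⇑f)
    (ht : Filter.Tendsto (fun n : ℕ => F^[n] 0 / n) Filter.atTop (nhds ρ))
    (n : ℤ) : (n : ℝ) * ρ - 1 ≤ Pz hF n 0 := by
  have h1 : ((⌈(n : ℝ) * ρ⌉ - 1 : ℤ) : ℝ) < n * ρ := by
    push_cast
    linarith [Int.ceil_lt_add_one ((n : ℝ) * ρ), Int.le_ceil ((n : ℝ) * ρ)]
  have h2 := star_gt hF ht h1 0
  have h3 := Int.le_ceil ((n : ℝ) * ρ)
  push_cast at h2
  linarith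

/-- The Poincaré semiconjugacy. -/
noncomputable def Hf (hF : IsLiftOf F ⇑f) (ρ : ℝ) : ℝ → ℝ :=
  fun x => ⨆ n : ℤ, ((n : ℝ) * ρ + (⌊x - Pz hF n 0⌋ : ℤ))

lemma H_bdd (hF : IsLiftOf F ⇑f)
    (ht : Filter.Tendsto (fun n : ℕ => F^[n] 0 / n) Filter.atTop (nhds ρ)) (x : ℝ) :
    BddAbove (Set.range fun n : ℤ => ((n : ℝ) * ρ + (⌊x - Pz hF n 0⌋ : ℤ) : ℝ)) := by
  refine ⟨x + 1, ?_⟩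
  rintro _ ⟨n, rfl⟩
  have h1 := Pz_zero_lb hF ht n
  have h2 : ((⌊x - Pz hF n 0⌋ : ℤ) : ℝ) ≤ x - Pz hF n 0 := Int.floor_le _
  simp only
  linarith

lemma H_mono (hF : IsLiftOf F ⇑f)
    (ht : Filter.Tendsto (fun n : ℕ => F^[n] 0 / n) Filter.atTop (nhds ρ)) :
    Monotone (Hf hF ρ) := by
  intro a b hab
  refine ciSup_mono (H_bdd hF ht b) fun n => ?_
  have h : (⌊a - Pz hF n 0⌋ : ℤ) ≤ ⌊b - Pz hF n 0⌋ := Int.floor_le_floor (by linarith)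
  exact add_le_add_right (by exact_mod_cast h) _

lemma H_add_int (hF : IsLiftOf F ⇑f)
    (ht : Filter.Tendsto (fun n : ℕ => F^[n] 0 / n) Filter.atTop (nhds ρ)) (x : ℝ) (k : ℤ) :
    Hf hF ρ (x + k) = Hf hF ρ x + k := by
  unfold Hf
  rw [← real_ciSup_add _ (H_bdd hF ht x) (k : ℝ)]
  congr 1
  funext n
  rw [show x + (k : ℝ) - Pz hF n 0 = (x - Pz hF n 0) + k by ring, Int.floor_add_intCast]
  push_cast
  ring

lemma map_add_int' (hF : IsLiftOf F ⇑f) (y : ℝ) (k : ℤ) : F (y + k) = F y + k :=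
  (toC1 hF).map_add_int y k

lemma H_F (hF : IsLiftOf F ⇑f)
    (ht : Filter.Tendsto (fun n : ℕ => F^[n] 0 / n) Filter.atTop (nhds ρ)) (x : ℝ) :
    Hf hF ρ (F x) = Hf hF ρ x + ρ := by
  have key : ∀ n : ℤ, ⌊F x - Pz hF n 0⌋ = ⌊x - Pz hF (n - 1) 0⌋ := by
    intro n
    set y := Pz hF (n - 1) 0 with hy
    have hP : Pz hF n 0 = F y := by rw [hy, ← Pz_succ hF, sub_add_cancel]
    refine le_antisymm (Int.le_floor.2 ?_) (Int.le_floor.2 ?_)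
    · set K := ⌊F x - Pz hF n 0⌋ with hKdef
      have hK : (K : ℝ) ≤ F x - F y := by rw [hKdef, ← hP]; exact Int.floor_le _
      have h2 : F (y + (K : ℝ)) ≤ F x := by
        rw [show ((K:ℝ)) = ((K:ℤ):ℝ) from rfl, map_add_int' hF]; linarith
      have h3 := (hF.1.le_iff_le).1 h2
      linarith
    · have h1 : ((⌊x - y⌋ : ℤ) : ℝ) ≤ x - y := Int.floor_le _
      have h2 : F (y + (⌊x - y⌋ : ℤ)) ≤ F x := hF.1.monotone (by linarith)
      rw [map_add_int' hF] at h2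
      rw [hP]
      linarith
  have e1 : (fun n : ℤ => ((n : ℝ) * ρ + ((⌊F x - Pz hF n 0⌋ : ℤ) : ℝ)))
      = (fun m : ℤ => ((m : ℝ) * ρ + ((⌊x - Pz hF m 0⌋ : ℤ) : ℝ)) + ρ) ∘ (fun n : ℤ => n - 1) := by
    funext n
    simp only [comp_apply]
    rw [key n]
    push_cast
    ring
  show (⨆ n : ℤ, ((n : ℝ) * ρ + ((⌊F x - Pz hF n 0⌋ : ℤ) : ℝ))) = _
  rw [e1]
  have e2 : (⨆ n : ℤ, ((fun m : ℤ => ((m : ℝ) * ρ + ((⌊x - Pz hF m 0⌋ : ℤ) : ℝ)) + ρ) ∘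
      (fun n : ℤ => n - 1)) n)
      = ⨆ m : ℤ, (((m : ℝ) * ρ + ((⌊x - Pz hF m 0⌋ : ℤ) : ℝ)) + ρ) := by
    unfold iSup
    congr 1
    rw [Set.range_comp]
    have hsurj : Function.Surjective (fun n : ℤ => n - 1) :=
      fun m => ⟨m + 1, by ring⟩
    rw [hsurj.range_eq, Set.image_univ]
  rw [e2, real_ciSup_add _ (H_bdd hF ht x) ρ]
  rfl

lemma H_iterate (hF : IsLiftOf F ⇑f)
    (ht : Filter.Tendsto (fun n : ℕ => F^[n] 0 / n) Filter.atTop (nhds ρ)) (m : ℕ) (x : ℝ) :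
    Hf hF ρ (F^[m] x) = Hf hF ρ x + m * ρ := by
  induction m with
  | zero => simp
  | succ m ih =>
    rw [iterate_succ_apply', H_F hF ht, ih]
    push_cast
    ring

lemma H_orbit (hF : IsLiftOf F ⇑f)
    (ht : Filter.Tendsto (fun n : ℕ => F^[n] 0 / n) Filter.atTop (nhds ρ)) (m k : ℤ) :
    Hf hF ρ (Pz hF m 0 + k) = m * ρ + k := by
  refine le_antisymm (ciSup_le fun n => ?_) ?_
  · -- n-th term ≤ m ρ + k
    have hfl : ⌊Pz hF m 0 + (k : ℝ) - Pz hF n 0⌋ = ⌊Pz hF m 0 - Pz hF n 0⌋ + k := by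
      rw [show Pz hF m 0 + (k : ℝ) - Pz hF n 0 = (Pz hF m 0 - Pz hF n 0) + k by ring,
        Int.floor_add_intCast]
    have hPm : Pz hF m 0 = Pz hF (m - n) (Pz hF n 0) := by
      rw [← Pz_add, sub_add_cancel]
    have hK : ((⌊Pz hF m 0 - Pz hF n 0⌋ : ℤ) : ℝ) ≤ (m - n : ℤ) * ρ := by
      by_contra hcon
      push_neg at hcon
      have h2 := star_lt hF ht (show ((m - n : ℤ) : ℝ) * ρ < (⌊Pz hF m 0 - Pz hF n 0⌋ : ℤ) by
        exact_mod_cast hcon) (Pz hF n 0)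
      rw [← hPm] at h2
      have h3 : ((⌊Pz hF m 0 - Pz hF n 0⌋ : ℤ) : ℝ) ≤ Pz hF m 0 - Pz hF n 0 := Int.floor_le _
      linarith
    rw [hfl]
    push_cast at hK ⊢
    linarith
  · -- m-th term = m ρ + k
    refine le_ciSup_of_le (H_bdd hF ht _) m ?_
    simp
lemma dense_orbit_values (hirr : Irrational ρ) {u v : ℝ} (huv : u < v) :
    ∃ m k : ℤ, (m : ℝ) * ρ + k ∈ Set.Ioo u v := by
  rcases AddSubgroup.dense_or_cyclic (AddSubgroup.closure {(1 : ℝ), ρ}) with hd | ⟨a, ha⟩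
  · obtain ⟨x, hxS, hx⟩ := hd.exists_between huv
    rw [SetLike.mem_coe, AddSubgroup.mem_closure_pair] at hxS
    obtain ⟨m, n, hmn⟩ := hxS
    exact ⟨n, m, by rw [show ((n:ℝ)*ρ + m) = m • (1:ℝ) + n • ρ by push_cast [zsmul_eq_mul]; ring, hmn]; exact hx⟩
  · exfalso
    have h1 : (1 : ℝ) ∈ AddSubgroup.closure {(1 : ℝ), ρ} :=
      AddSubgroup.subset_closure (by simp)
    have hρ : ρ ∈ AddSubgroup.closure {(1 : ℝ), ρ} :=
      AddSubgroup.subset_closure (by simp)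
    rw [ha, ← AddSubgroup.zmultiples_eq_closure, AddSubgroup.mem_zmultiples_iff] at h1 hρ
    obtain ⟨n, hn⟩ := h1
    obtain ⟨m, hm⟩ := hρ
    have hn0 : (n : ℝ) ≠ 0 := by
      intro h0
      rw [zsmul_eq_mul, h0, zero_mul] at hn
      norm_num at hn
    refine hirr ⟨(m : ℚ) / (n : ℚ), ?_⟩
    rw [zsmul_eq_mul] at hn hm
    have hρn : ρ * n = m := by
      calc ρ * n = m * a * n := by rw [hm]
      _ = m * (n * a) := by ring
      _ = m := by rw [hn, mul_one]
    push_cast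
    rw [div_eq_iff hn0]
    linarith

lemma H_small_right (hF : IsLiftOf F ⇑f)
    (ht : Filter.Tendsto (fun n : ℕ => F^[n] 0 / n) Filter.atTop (nhds ρ))
    (hirr : Irrational ρ) (β : ℝ) :
    ∃ ε > 0, ∀ t : ℝ, 0 < t → t ≤ ε → Hf hF ρ (β + t) < Hf hF ρ β + 1 / 2 := by
  obtain ⟨m, k, hmk⟩ := dense_orbit_values hirr
    (show Hf hF ρ β < Hf hF ρ β + 1 / 2 by linarith)
  set x₀ := Pz hF m 0 + (k : ℝ) with hx₀
  have hH : Hf hF ρ x₀ = (m : ℝ) * ρ + k := H_orbit hF ht m k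
  have hβx : β < x₀ := by
    by_contra hcon
    push_neg at hcon
    have := H_mono hF ht hcon
    rw [hH] at this
    exact absurd hmk.1 (not_lt.2 this)
  refine ⟨x₀ - β, by linarith, fun t ht0 htε => ?_⟩
  have h1 : Hf hF ρ (β + t) ≤ Hf hF ρ x₀ := H_mono hF ht (by linarith)
  rw [hH] at h1
  exact lt_of_le_of_lt h1 hmk.2

end Stmt12
end Stmt12Aux3
section Stmt12Aux4
open Function

namespace Stmt12

variable {f : UnitAddCircle ≃ₜ UnitAddCircle}

lemma commute_symm (f : UnitAddCircle ≃ₜ UnitAddCircle) :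
    Function.Commute ⇑f ⇑f.symm := fun z => by simp

lemma nw_mem_symm {x : UnitAddCircle} (hx : x ∈ NW ⇑f) : f.symm x ∈ NW ⇑f := by
  intro U hU
  have hV : ⇑f.symm ⁻¹' U ∈ nhds x :=
    (f.symm.continuous.continuousAt).preimage_mem_nhds hU
  obtain ⟨n, hn1, y, ⟨⟨w, hwV, hwy⟩, hyV⟩⟩ := hx _ hV
  refine ⟨n, hn1, f.symm y, ⟨⟨f.symm w, hwV, ?_⟩, hyV⟩⟩
  rw [← hwy]
  exact ((commute_symm f).iterate_left n) w

lemma nw_mem_map {x : UnitAddCircle} (hx : x ∈ NW ⇑f) : f x ∈ NW ⇑f := by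
  intro U hU
  have hV : ⇑f ⁻¹' U ∈ nhds x :=
    (f.continuous.continuousAt).preimage_mem_nhds hU
  obtain ⟨n, hn1, y, ⟨⟨w, hwV, hwy⟩, hyV⟩⟩ := hx _ hV
  refine ⟨n, hn1, f y, ⟨⟨f w, hwV, ?_⟩, hyV⟩⟩
  rw [← hwy]
  exact (Function.Commute.refl ⇑f).iterate_left n w

lemma nw_mem_symm_iter {x : UnitAddCircle} (hx : x ∈ NW ⇑f) (t : ℕ) :
    (⇑f.symm)^[t] x ∈ NW ⇑f := by
  induction t with
  | zero => exact hx
  | succ t ih => rw [iterate_succ_apply']; exact nw_mem_symm ih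

lemma nw_mem_iter {x : UnitAddCircle} (hx : x ∈ NW ⇑f) (t : ℕ) :
    (⇑f)^[t] x ∈ NW ⇑f := by
  induction t with
  | zero => exact hx
  | succ t ih => rw [iterate_succ_apply']; exact nw_mem_map ih

lemma exists_gap (hne : (NW ⇑f).Nonempty) (hcl : IsClosed (NW ⇑f))
    (hnu : NW ⇑f ≠ Set.univ) :
    ∃ (b : UnitAddCircle) (ℓ : ℝ), b ∈ NW ⇑f ∧ 0 < ℓ ∧
      ∀ s : ℝ, 0 < s → s < ℓ → b - ((s : ℝ) : UnitAddCircle) ∉ NW ⇑f := by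
  obtain ⟨z, hz⟩ := (Set.ne_univ_iff_exists_notMem _).1 hnu
  set S : Set ℝ := Set.Icc (0 : ℝ) 1 ∩ (fun t : ℝ => z + ((t : ℝ) : UnitAddCircle)) ⁻¹' (NW ⇑f)
    with hS
  have hScl : IsClosed S :=
    isClosed_Icc.inter (hcl.preimage (continuous_const.add (AddCircle.continuous_mk' (1:ℝ))))
  have hSne : S.Nonempty := by
    obtain ⟨w, hw⟩ := hne
    obtain ⟨s, hs01, hsw⟩ := AddCircle.eq_coe_Ico (w - z)
    refine ⟨s, ⟨hs01.1, le_of_lt (by simpa using hs01.2)⟩, ?_⟩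
    show z + ((s : ℝ) : UnitAddCircle) ∈ NW ⇑f
    rw [hsw]
    simpa using hw
  have hSbdd : BddBelow S := ⟨0, fun t htS => htS.1.1⟩
  set t₀ := sInf S with ht₀
  have ht₀S : t₀ ∈ S := hScl.csInf_mem hSne hSbdd
  have ht₀pos : 0 < t₀ := by
    rcases lt_or_eq_of_le ht₀S.1.1 with h | h
    · exact h
    · exfalso
      apply hz
      have := ht₀S.2
      rw [← h] at this
      simpa using this
  refine ⟨z + ((t₀ : ℝ) : UnitAddCircle), t₀, ht₀S.2, ht₀pos, fun s hs0 hst₀ hmem => ?_⟩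
  have key : z + ((t₀ : ℝ) : UnitAddCircle) - ((s : ℝ) : UnitAddCircle)
      = z + (((t₀ - s : ℝ)) : UnitAddCircle) := by
    rw [AddCircle.coe_sub]
    abel
  rw [key] at hmem
  have : t₀ - s ∈ S := ⟨⟨by linarith, by linarith [ht₀S.1.2]⟩, hmem⟩
  have := csInf_le hSbdd this
  linarith

end Stmt12
end Stmt12Aux4
section Stmt12Aux5
open Function

namespace Stmt12

variable {f : UnitAddCircle ≃ₜ UnitAddCircle} {F : ℝ → ℝ} {ρ : ℝ}

lemma iter_add_one (hF : IsLiftOf F ⇑f) (m : ℕ) (x : ℝ) : F^[m] (x + 1) = F^[m] x + 1 := by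
  have := (toC1 hF ^ m).map_add_one x
  rwa [CircleDeg1Lift.coe_pow] at this

/-- zone lemma : a nonwandering point close to `b` lies (strictly) counterclockwise of `b`. -/
lemma zone (hirr : Irrational ρ) (hF : IsLiftOf F ⇑f)
    (ht : Filter.Tendsto (fun n : ℕ => F^[n] 0 / n) Filter.atTop (nhds ρ))
    {b : UnitAddCircle} {ℓ ε : ℝ} (hε0 : 0 < ε) (hεℓ : ε ≤ ℓ)
    (hgap : ∀ s : ℝ, 0 < s → s < ℓ → b - ((s : ℝ) : UnitAddCircle) ∉ NW ⇑f)
    {w : UnitAddCircle} (hw : w ∈ NW ⇑f) (hwb : w ≠ b) (hd : dist b w < ε) :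
    ∃ t : ℝ, 0 < t ∧ t < ε ∧ w = b + ((t : ℝ) : UnitAddCircle) := by
  obtain ⟨t, htw, htn⟩ := exists_signed_rep (w - b)
  have hw' : w = b + ((t : ℝ) : UnitAddCircle) := by rw [← htw]; abel
  have htd : |t| < ε := by
    rw [htn, ← dist_eq_norm]
    rwa [dist_comm] at hd
  have ht0 : t ≠ 0 := by
    intro h0
    apply hwb
    rw [hw', h0]
    simp
  rcases lt_or_gt_of_ne ht0 with hneg | hpos
  · exfalso
    refine hgap (-t) (by linarith) (by rw [abs_of_neg hneg] at htd; linarith) ?_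
    have : b - ((-t : ℝ) : UnitAddCircle) = b + ((t : ℝ) : UnitAddCircle) := by
      rw [AddCircle.coe_neg]
      abel
    rw [this, ← hw']
    exact hw
  · exact ⟨t, hpos, by rwa [abs_of_pos hpos] at htd, hw'⟩

lemma key_sep (hirr : Irrational ρ) (hF : IsLiftOf F ⇑f)
    (ht : Filter.Tendsto (fun n : ℕ => F^[n] 0 / n) Filter.atTop (nhds ρ))
    {b : UnitAddCircle} (hb : b ∈ NW ⇑f) {β : ℝ} (hβ : ((β : ℝ) : UnitAddCircle) = b)
    {ℓ εH ε : ℝ} (hε0 : 0 < ε) (hεℓ : ε ≤ ℓ) (hεH : ε ≤ εH) (hεhalf : ε ≤ 1/2)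
    (hgap : ∀ s : ℝ, 0 < s → s < ℓ → b - ((s : ℝ) : UnitAddCircle) ∉ NW ⇑f)
    (hH : ∀ t : ℝ, 0 < t → t ≤ εH → Hf hF ρ (β + t) < Hf hF ρ β + 1 / 2)
    {m : ℕ} (hm : 0 < m) :
    ε ≤ dist b ((⇑f.symm)^[m] b) ∨ ε ≤ dist ((⇑f)^[m] b) b := by
  by_contra hcon
  push_neg at hcon
  obtain ⟨hd1, hd2⟩ := hcon
  set p := (⇑f.symm)^[m] b with hp
  set q := (⇑f)^[m] b with hq
  have hli : LeftInverse ⇑f ⇑f.symm := f.apply_symm_apply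
  have hpb : p ≠ b := by
    intro h
    have : (⇑f)^[m] p = (⇑f)^[m] b := congrArg _ h
    rw [hp, (hli.iterate m) b] at this
    exact lift_no_per hF ht hirr hm b this.symm
  have hqb : q ≠ b := lift_no_per hF ht hirr hm b
  -- zones
  obtain ⟨tp, htp0, htpε, htpw⟩ := zone hirr hF ht hε0 hεℓ hgap (nw_mem_symm_iter hb m) hpb hd1
  obtain ⟨tq, htq0, htqε, htqw⟩ := zone hirr hF ht hε0 hεℓ hgap (nw_mem_iter hb m) hqb
    (by rwa [dist_comm] at hd2)
  -- lift bookkeeping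
  have hfmp : (⇑f)^[m] p = b := (hli.iterate m) b
  have hGp : ((F^[m] (β + tp) : ℝ) : UnitAddCircle) = ((β : ℝ) : UnitAddCircle) := by
    rw [← lift_iterate hF, AddCircle.coe_add, hβ, ← htpw, hfmp]
  have hGb : ((F^[m] β : ℝ) : UnitAddCircle) = (((β + tq : ℝ)) : UnitAddCircle) := by
    rw [← lift_iterate hF, hβ, htqw, AddCircle.coe_add, hβ]
  obtain ⟨K, hK⟩ := coe_eq_coe_iff.1 hGp
  obtain ⟨K', hK'⟩ := coe_eq_coe_iff.1 hGb
  have hmono := hF.1.iterate m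
  have h1 : F^[m] β < F^[m] (β + tp) := hmono (by linarith)
  have h2 : F^[m] (β + tp) < F^[m] β + 1 := by
    have := hmono (show β + tp < β + 1 by linarith)
    rwa [iter_add_one hF] at this
  rw [hK, hK'] at h1 h2
  -- K = K' + 1
  have hKK' : (K : ℝ) = K' + 1 := by
    have hlt : (K' : ℝ) < K := by linarith
    have hlt2 : (K : ℝ) < K' + 2 := by linarith
    have : K' < K := by exact_mod_cast hlt
    have : K < K' + 2 := by exact_mod_cast hlt2
    have : K = K' + 1 := by omega
    exact_mod_cast this
  -- H computations
  have e1 : Hf hF ρ (β + tp) + m * ρ = Hf hF ρ β + K := by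
    rw [← H_iterate hF ht m (β + tp), hK, H_add_int hF ht]
  have e2 : Hf hF ρ β + m * ρ = Hf hF ρ (β + tq) + K' := by
    rw [← H_iterate hF ht m β, hK', H_add_int hF ht]
  have b1 : Hf hF ρ β ≤ Hf hF ρ (β + tp) := H_mono hF ht (by linarith)
  have b2 : Hf hF ρ (β + tp) < Hf hF ρ β + 1/2 := hH tp htp0 (by linarith)
  have b3 : Hf hF ρ β ≤ Hf hF ρ (β + tq) := H_mono hF ht (by linarith)
  have b4 : Hf hF ρ (β + tq) < Hf hF ρ β + 1/2 := hH tq htq0 (by linarith)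
  linarith

lemma lower_bound (hirr : Irrational ρ) (hF : IsLiftOf F ⇑f)
    (ht : Filter.Tendsto (fun n : ℕ => F^[n] 0 / n) Filter.atTop (nhds ρ))
    (hne : (NW ⇑f).Nonempty) (hcl : IsClosed (NW ⇑f)) (hnu : NW ⇑f ≠ Set.univ) :
    ∃ ε₀ : ℝ, 0 < ε₀ ∧ ∀ n : ℕ, ∃ E : Finset UnitAddCircle, ↑E ⊆ NW ⇑f ∧
      IsDynSeparated ⇑f n ε₀ ↑E ∧ E.card = n := by
  obtain ⟨b, ℓ, hb, hℓ0, hgap⟩ := exists_gap hne hcl hnu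
  obtain ⟨β, hβ01, hβ⟩ := AddCircle.eq_coe_Ico b
  obtain ⟨εH, hεH0, hH⟩ := H_small_right hF ht hirr β
  set ε₀ := min ℓ (min εH (1/2)) with hε₀
  have hε₀0 : 0 < ε₀ := lt_min hℓ0 (lt_min hεH0 (by norm_num))
  have hε₀ℓ : ε₀ ≤ ℓ := min_le_left _ _
  have hε₀H : ε₀ ≤ εH := le_trans (min_le_right _ _) (min_le_left _ _)
  have hε₀half : ε₀ ≤ 1/2 := le_trans (min_le_right _ _) (min_le_right _ _)
  refine ⟨ε₀, hε₀0, fun n => ?_⟩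
  have hli : LeftInverse ⇑f ⇑f.symm := f.apply_symm_apply
  -- injectivity
  have hne' : ∀ i j : ℕ, i < j → (⇑f.symm)^[i] b ≠ (⇑f.symm)^[j] b := by
    intro i j hij heq
    have h1 : (⇑f.symm)^[j] b = (⇑f.symm)^[i] ((⇑f.symm)^[j - i] b) := by
      rw [← Function.iterate_add_apply]
      congr 1
      omega
    have h2 : (⇑f)^[i] ((⇑f.symm)^[i] b) = (⇑f)^[i] ((⇑f.symm)^[i] ((⇑f.symm)^[j-i] b)) := by
      rw [← h1, heq]
    rw [(hli.iterate i) b, (hli.iterate i) _] at h2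
    have h3 : (⇑f)^[j-i] ((⇑f.symm)^[j-i] b) = (⇑f)^[j-i] b := by rw [← h2]
    rw [(hli.iterate (j-i)) b] at h3
    exact lift_no_per hF ht hirr (show 0 < j - i by omega) b h3.symm
  have hinj : Function.Injective fun t : ℕ => (⇑f.symm)^[t] b := by
    intro i j hij
    rcases lt_trichotomy i j with h | h | h
    · exact absurd hij (hne' i j h)
    · exact h
    · exact absurd hij.symm (hne' j i h)
  refine ⟨(Finset.range n).image (fun t : ℕ => (⇑f.symm)^[t] b), ?_, ?_, ?_⟩
  · intro x hx
    simp only [Finset.coe_image, Set.mem_image, Finset.coe_range, Set.mem_Iio] at hx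
    obtain ⟨i, _, rfl⟩ := hx
    exact nw_mem_symm_iter hb i
  · -- separated
    intro x hx y hy hxy
    simp only [Finset.coe_image, Set.mem_image, Finset.coe_range, Set.mem_Iio] at hx hy
    obtain ⟨i, hi, rfl⟩ := hx
    obtain ⟨j, hj, rfl⟩ := hy
    have main : ∀ i j : ℕ, i < j → j < n →
        ε₀ ≤ dynDist (⇑f) n ((⇑f.symm)^[i] b) ((⇑f.symm)^[j] b) := by
      intro i j hij hjn
      set m := j - i with hm
      have hm0 : 0 < m := by omega
      have hiter1 : (⇑f)^[i] ((⇑f.symm)^[i] b) = b := (hli.iterate i) b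
      have hiter2 : (⇑f)^[i] ((⇑f.symm)^[j] b) = (⇑f.symm)^[m] b := by
        rw [show j = i + m by omega, Function.iterate_add_apply (⇑f.symm) i m b,
          (hli.iterate i) _]
      have hiter3 : (⇑f)^[j] ((⇑f.symm)^[i] b) = (⇑f)^[m] b := by
        rw [show j = m + i by omega, Function.iterate_add_apply (⇑f) m i _, hiter1]
      have hiter4 : (⇑f)^[j] ((⇑f.symm)^[j] b) = b := (hli.iterate j) b
      rcases key_sep hirr hF ht hb hβ hε₀0 hε₀ℓ hε₀H hε₀half hgap hH hm0 with hsep | hsep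
      · refine le_trans ?_ (le_dynDist (show i < n by omega))
        rw [hiter1, hiter2]
        exact hsep
      · refine le_trans ?_ (le_dynDist (show j < n by omega))
        rw [hiter3, hiter4]
        exact hsep
    rcases lt_trichotomy i j with h | h | h
    · exact main i j h hj
    · exact absurd (by rw [h]) hxy
    · rw [dynDist_comm]
      exact main j i h hi
  · rw [Finset.card_image_of_injective _ hinj, Finset.card_range]

end Stmt12
end Stmt12Aux5
section Stmt12Aux6
open Function

namespace Stmt12

variable {f : UnitAddCircle ≃ₜ UnitAddCircle} {F : ℝ → ℝ}

lemma norm_coe_le (t : ℝ) : ‖(t : UnitAddCircle)‖ ≤ |t| := by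
  rw [UnitAddCircle.norm_eq]
  simpa using round_le t 0

lemma dist_coe_le (u v : ℝ) : dist ((u : ℝ) : UnitAddCircle) ((v : ℝ) : UnitAddCircle) ≤ |u - v| := by
  rw [dist_eq_norm, ← AddCircle.coe_sub]
  exact norm_coe_le _

/-- representative map -/
noncomputable def rep (x : UnitAddCircle) : ℝ := ((AddCircle.equivIco 1 0 x : ℝ))

lemma rep_mem (x : UnitAddCircle) : rep x ∈ Set.Ico (0:ℝ) 1 := by
  have := (AddCircle.equivIco 1 0 x).2
  simpa [rep] using this

lemma rep_coe (x : UnitAddCircle) : ((rep x : ℝ) : UnitAddCircle) = x :=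
  (AddCircle.equivIco 1 0).symm_apply_apply x

lemma rep_injective : Function.Injective rep := by
  intro x y h
  rw [← rep_coe x, ← rep_coe y, h]

lemma sep_card_le (hF : IsLiftOf F ⇑f) {n : ℕ} {ε : ℝ} (hε : 0 < ε)
    (E : Finset UnitAddCircle) (hsep : IsDynSeparated ⇑f n ε ↑E) :
    (E.card : ℝ) ≤ n / ε + 1 := by
  set m := E.card with hm
  rcases le_or_gt m 1 with hm1 | hm1
  · have : (m : ℝ) ≤ 1 := by exact_mod_cast hm1
    have : (0:ℝ) ≤ n / ε := div_nonneg (Nat.cast_nonneg n) hε.le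
    linarith
  -- m ≥ 2 : there are two distinct points, so n ≥ 1
  have hn1 : 1 ≤ n := by
    by_contra hn
    push_neg at hn
    interval_cases n
    obtain ⟨x, hx, y, hy, hxy⟩ := Finset.one_lt_card.1 hm1
    have h1 := hsep x hx y hy hxy
    have h2 : dynDist (⇑f) 0 x y ≤ 0 := dynDist_le le_rfl (by omega)
    linarith
  -- sorted representatives
  set R : Finset ℝ := E.image rep with hR
  have hRcard : R.card = m := by
    rw [hR, Finset.card_image_of_injective _ rep_injective]
  set σ := R.orderIsoOfFin hRcard with hσ
  set r : ℕ → ℝ := fun i => if h : i < m then (σ ⟨i, h⟩ : ℝ) else 0 with hr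
  have hrR : ∀ i (h : i < m), r i ∈ R := by
    intro i h
    rw [hr]
    simp only [h, dif_pos]
    exact (σ ⟨i, h⟩).2
  have hrmem : ∀ i (h : i < m), r i ∈ Set.Ico (0:ℝ) 1 := by
    intro i h
    obtain ⟨x, hx, hxr⟩ := Finset.mem_image.1 (hrR i h)
    rw [← hxr]; exact rep_mem x
  have hrmono : ∀ i j (hi : i < m) (hj : j < m), i < j → r i < r j := by
    intro i j hi hj hij
    rw [hr]
    simp only [hi, hj, dif_pos]
    exact_mod_cast σ.strictMono (show (⟨i, hi⟩ : Fin m) < ⟨j, hj⟩ from hij)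
  set pt : ℕ → UnitAddCircle := fun i => ((r i : ℝ) : UnitAddCircle) with hpt
  have hptE : ∀ i (h : i < m), pt i ∈ E := by
    intro i h
    obtain ⟨x, hx, hxr⟩ := Finset.mem_image.1 (hrR i h)
    rw [hpt]
    simp only
    rw [← hxr, rep_coe]
    exact hx
  have hptne : ∀ i j (hi : i < m) (hj : j < m), i < j → pt i ≠ pt j := by
    intro i j hi hj hij heq
    have h1 := hrmono i j hi hj hij
    have h2 : r i = r j := by
      have e1 := hrmem i hi
      have e2 := hrmem j hj
      rw [show (1:ℝ) = 0 + 1 by ring] at e1 e2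
      exact (AddCircle.coe_eq_coe_iff_of_mem_Ico e1 e2).1 heq
    linarith
  -- choose separating times for adjacent pairs
  have hadj : ∀ i, i < m - 1 → ∃ k < n, ε ≤ dist ((⇑f)^[k] (pt i)) ((⇑f)^[k] (pt (i+1))) := by
    intro i hi
    have hi1 : i < m := by omega
    have hi2 : i + 1 < m := by omega
    exact exists_dist_of_le_dynDist hε
      (hsep _ (hptE i hi1) _ (hptE (i+1) hi2) (hptne i (i+1) hi1 hi2 (by omega)))
  choose kk hkk1 hkk2 using hadj
  -- sum bound
  have key : ((m - 1 : ℕ) : ℝ) * ε ≤ n := by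
    have step1 : ((m - 1 : ℕ) : ℝ) * ε =
        ∑ i ∈ Finset.range (m - 1), ε := by
      rw [Finset.sum_const, Finset.card_range, nsmul_eq_mul]
    have step2 : ∀ i ∈ Finset.range (m - 1),
        ε ≤ ∑ k ∈ Finset.range n, dist ((⇑f)^[k] (pt i)) ((⇑f)^[k] (pt (i+1))) := by
      intro i hi
      have hi' := Finset.mem_range.1 hi
      refine le_trans (hkk2 i hi') ?_
      exact Finset.single_le_sum (f := fun k => dist ((⇑f)^[k] (pt i)) ((⇑f)^[k] (pt (i+1))))
        (fun k _ => dist_nonneg) (Finset.mem_range.2 (hkk1 i hi'))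
    have step3 : ∑ i ∈ Finset.range (m-1), ∑ k ∈ Finset.range n,
        dist ((⇑f)^[k] (pt i)) ((⇑f)^[k] (pt (i+1)))
        = ∑ k ∈ Finset.range n, ∑ i ∈ Finset.range (m-1),
        dist ((⇑f)^[k] (pt i)) ((⇑f)^[k] (pt (i+1))) := Finset.sum_comm
    have step4 : ∀ k ∈ Finset.range n, ∑ i ∈ Finset.range (m-1),
        dist ((⇑f)^[k] (pt i)) ((⇑f)^[k] (pt (i+1))) ≤ 1 := by
      intro k _
      have hterm : ∀ i ∈ Finset.range (m-1),
          dist ((⇑f)^[k] (pt i)) ((⇑f)^[k] (pt (i+1)))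
          ≤ F^[k] (r (i+1)) - F^[k] (r i) := by
        intro i hi
        have hi' := Finset.mem_range.1 hi
        have e1 : (⇑f)^[k] (pt i) = ((F^[k] (r i) : ℝ) : UnitAddCircle) := lift_iterate hF k _
        have e2 : (⇑f)^[k] (pt (i+1)) = ((F^[k] (r (i+1)) : ℝ) : UnitAddCircle) :=
          lift_iterate hF k _
        rw [e1, e2]
        refine le_trans (dist_coe_le _ _) ?_
        rw [abs_sub_comm, abs_of_nonneg]
        exact sub_nonneg.2 ((hF.1.iterate k).monotone
          (le_of_lt (hrmono i (i+1) (by omega) (by omega) (by omega))))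
      refine le_trans (Finset.sum_le_sum hterm) ?_
      rw [Finset.sum_range_sub (fun i => F^[k] (r i)) (m-1)]
      -- telescoped : F^[k] (r (m-1)) - F^[k] (r 0) ≤ 1
      have h1 : r (m-1) ≤ r 0 + 1 := by
        have e1 := hrmem (m-1) (by omega)
        have e2 := hrmem 0 (by omega)
        have := e1.2
        have := e2.1
        linarith
      have h2 : F^[k] (r (m-1)) ≤ F^[k] (r 0) + 1 := by
        calc F^[k] (r (m-1)) ≤ F^[k] (r 0 + 1) := (hF.1.iterate k).monotone h1
        _ = F^[k] (r 0) + 1 := iter_add_one hF k _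
      linarith
    calc ((m - 1 : ℕ) : ℝ) * ε = ∑ i ∈ Finset.range (m - 1), ε := step1
    _ ≤ ∑ i ∈ Finset.range (m-1), ∑ k ∈ Finset.range n,
        dist ((⇑f)^[k] (pt i)) ((⇑f)^[k] (pt (i+1))) := Finset.sum_le_sum step2
    _ = _ := step3
    _ ≤ ∑ k ∈ Finset.range n, (1:ℝ) := Finset.sum_le_sum step4
    _ = n := by rw [Finset.sum_const, Finset.card_range, nsmul_eq_mul, mul_one]
  have hcast : ((m - 1 : ℕ) : ℝ) = (m : ℝ) - 1 := by
    have : 1 ≤ m := by omega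
    push_cast [this]
    ring
  rw [hcast] at key
  rw [show (n:ℝ)/ε + 1 = (n:ℝ)/ε + 1 from rfl]
  have := (le_div_iff₀ hε).2 (by linarith : ((m:ℝ) - 1) * ε ≤ n)
  linarith

lemma sepCount_le_real (hF : IsLiftOf F ⇑f) {Y : Set UnitAddCircle} {n : ℕ} {ε : ℝ} (hε : 0 < ε) :
    (sepCount ⇑f Y n ε : ℝ) ≤ n / ε + 1 := by
  have hbdd : ∀ m' ∈ {m | ∃ E : Finset UnitAddCircle, ↑E ⊆ Y ∧ IsDynSeparated ⇑f n ε ↑E ∧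
      E.card = m}, m' ≤ ⌊(n : ℝ) / ε + 1⌋₊ := by
    rintro m' ⟨E, _, hsep, rfl⟩
    exact Nat.le_floor (sep_card_le hF hε E hsep)
  have hne : {m | ∃ E : Finset UnitAddCircle, ↑E ⊆ Y ∧ IsDynSeparated ⇑f n ε ↑E ∧
      E.card = m}.Nonempty := ⟨0, ∅, by simp, by intro x hx; simp at hx, rfl⟩
  have h1 : sepCount ⇑f Y n ε ≤ ⌊(n : ℝ) / ε + 1⌋₊ := csSup_le hne hbdd
  calc (sepCount ⇑f Y n ε : ℝ) ≤ (⌊(n : ℝ) / ε + 1⌋₊ : ℝ) := by exact_mod_cast h1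
  _ ≤ (n : ℝ) / ε + 1 := Nat.floor_le (by positivity)

lemma sepCount_bddAbove (hF : IsLiftOf F ⇑f) {Y : Set UnitAddCircle} {n : ℕ} {ε : ℝ}
    (hε : 0 < ε) :
    BddAbove {m | ∃ E : Finset UnitAddCircle, ↑E ⊆ Y ∧ IsDynSeparated ⇑f n ε ↑E ∧ E.card = m} := by
  refine ⟨⌊(n : ℝ) / ε + 1⌋₊, ?_⟩
  rintro m' ⟨E, _, hsep, rfl⟩
  exact Nat.le_floor (sep_card_le hF hε E hsep)

end Stmt12
end Stmt12Aux6
section Stmt12Aux7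
open Function Filter

namespace Stmt12

variable {f : UnitAddCircle ≃ₜ UnitAddCircle} {F : ℝ → ℝ}

lemma limsup_le_one (hF : IsLiftOf F ⇑f) {Y : Set UnitAddCircle} {ε : ℝ} (hε : 0 < ε) :
    Filter.limsup (fun n : ℕ =>
      ((Real.log (sepCount ⇑f Y n ε) / Real.log n : ℝ) : EReal)) Filter.atTop ≤ 1 := by
  set C : ℝ := 1 / ε + 1 with hC
  have hC1 : 1 ≤ C := by
    rw [hC]
    have : 0 < 1 / ε := by positivity
    linarith
  have hev : ∀ᶠ n : ℕ in atTop, ((Real.log (sepCount ⇑f Y n ε) / Real.log n : ℝ) : EReal)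
      ≤ ((Real.log (C * n) / Real.log n : ℝ) : EReal) := by
    filter_upwards [Filter.eventually_ge_atTop 2] with n hn
    have hn1 : (1 : ℝ) ≤ (n : ℝ) := by exact_mod_cast le_trans one_le_two hn
    have hlogn : 0 < Real.log n := Real.log_pos (by exact_mod_cast hn)
    have hsC : (sepCount ⇑f Y n ε : ℝ) ≤ C * n := by
      calc (sepCount ⇑f Y n ε : ℝ) ≤ n / ε + 1 := sepCount_le_real hF hε
      _ = (n : ℝ) * (1 / ε) + 1 := by ring
      _ ≤ (n : ℝ) * (1 / ε) + n := by linarith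
      _ = C * n := by rw [hC]; ring
    have hCn1 : (1 : ℝ) ≤ C * n := by nlinarith
    have hlog : Real.log (sepCount ⇑f Y n ε) ≤ Real.log (C * n) := by
      rcases Nat.eq_zero_or_pos (sepCount ⇑f Y n ε) with h0 | hpos
      · rw [h0]
        simpa using Real.log_nonneg hCn1
      · exact Real.log_le_log (by exact_mod_cast hpos) hsC
    have : Real.log (sepCount ⇑f Y n ε) / Real.log n ≤ Real.log (C * n) / Real.log n := by
      gcongr
    exact_mod_cast EReal.coe_le_coe_iff.2 this
  refine le_trans (Filter.limsup_le_limsup hev) ?_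
  have hreal : Filter.Tendsto (fun n : ℕ => (Real.log (C * n) / Real.log n : ℝ))
      atTop (nhds 1) := by
    have h0 : Filter.Tendsto (fun n : ℕ => Real.log C / Real.log n) atTop (nhds 0) :=
      Filter.Tendsto.div_atTop tendsto_const_nhds
        (Real.tendsto_log_atTop.comp tendsto_natCast_atTop_atTop)
    have h1 : Filter.Tendsto (fun n : ℕ => Real.log C / Real.log n + 1) atTop (nhds 1) := by
      simpa using h0.add tendsto_const_nhds
    refine Filter.Tendsto.congr' ?_ h1
    filter_upwards [Filter.eventually_ge_atTop 2] with n hn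
    have hn1 : (1 : ℝ) ≤ (n : ℝ) := by exact_mod_cast le_trans one_le_two hn
    have hlogn : 0 < Real.log n := Real.log_pos (by exact_mod_cast hn)
    have hC0 : C ≠ 0 := by linarith
    have hn0 : (n : ℝ) ≠ 0 := by linarith
    rw [Real.log_mul hC0 hn0, add_div, div_self (ne_of_gt hlogn)]
  have hE : Filter.Tendsto (fun n : ℕ =>
      ((Real.log (C * n) / Real.log n : ℝ) : EReal)) atTop (nhds (1 : EReal)) := by
    have := (continuous_coe_real_ereal.tendsto (1 : ℝ)).comp hreal
    simpa [Function.comp_def] using this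
  rw [hE.limsup_eq]

lemma one_le_limsup (hF : IsLiftOf F ⇑f) {Y : Set UnitAddCircle} {ε₀ : ℝ} (hε₀ : 0 < ε₀)
    (hbig : ∀ n : ℕ, n ≤ sepCount ⇑f Y n ε₀) :
    (1 : EReal) ≤ Filter.limsup (fun n : ℕ =>
      ((Real.log (sepCount ⇑f Y n ε₀) / Real.log n : ℝ) : EReal)) Filter.atTop := by
  have hev : ∀ᶠ n : ℕ in atTop, (1 : EReal)
      ≤ ((Real.log (sepCount ⇑f Y n ε₀) / Real.log n : ℝ) : EReal) := by
    filter_upwards [Filter.eventually_ge_atTop 2] with n hn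
    have hn1 : (2 : ℝ) ≤ (n : ℝ) := by exact_mod_cast hn
    have hlogn : 0 < Real.log n := Real.log_pos (by linarith)
    have hsep : (n : ℝ) ≤ (sepCount ⇑f Y n ε₀ : ℝ) := by exact_mod_cast hbig n
    have hlog : Real.log n ≤ Real.log (sepCount ⇑f Y n ε₀) :=
      Real.log_le_log (by linarith) hsep
    have h1 : (1 : ℝ) ≤ Real.log (sepCount ⇑f Y n ε₀) / Real.log n := by
      rw [le_div_iff₀ hlogn]
      linarith
    exact_mod_cast EReal.coe_le_coe_iff.2 h1
  exact Filter.le_limsup_of_frequently_le hev.frequently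

end Stmt12
end Stmt12Aux7
/-- irrational rotation number, Cantor non-wandering set:
`h_pol(f; NW(f)) = 1`. -/
theorem stmt_12 (f : UnitAddCircle ≃ₜ UnitAddCircle) (ρ : ℝ) (hirr : Irrational ρ)
    (hρ : HasRotationNumber (f : UnitAddCircle → UnitAddCircle) ρ)
    (hC : IsCantorSet (NW (f : UnitAddCircle → UnitAddCircle))) :
    hpolOn (f : UnitAddCircle → UnitAddCircle)
      (NW (f : UnitAddCircle → UnitAddCircle)) = 1 := by
  classical
  obtain ⟨F, hF, ht⟩ := hρ
  have hne : (NW ⇑f).Nonempty := hC.1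
  have hcl : IsClosed (NW ⇑f) := hC.2.1.isClosed
  have hnu : NW ⇑f ≠ Set.univ := by
    intro h
    have hsurj : Function.Surjective ((↑) : ℝ → UnitAddCircle) := by
      intro x
      obtain ⟨b, _, hb⟩ := AddCircle.eq_coe_Ico x
      exact ⟨b, hb⟩
    have hpre : IsPreconnected (Set.univ : Set UnitAddCircle) := by
      have h2 := (isPreconnected_univ (α := ℝ)).image ((↑) : ℝ → UnitAddCircle)
        (AddCircle.continuous_mk' (1 : ℝ)).continuousOn
      rwa [Set.image_univ, hsurj.range_eq] at h2
    have hsub : (Set.univ : Set UnitAddCircle).Subsingleton :=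
      hC.2.2.2 Set.univ (h ▸ Set.Subset.rfl) hpre
    have h2 : ((1/2 : ℝ) : UnitAddCircle) ≠ ((0 : ℝ) : UnitAddCircle) := by
      intro hh
      obtain ⟨k, hk⟩ := Stmt12.coe_eq_coe_iff.1 hh
      have h3 : (2 * k : ℝ) = 1 := by push_cast at hk ⊢; linarith
      have h4 : (2 * k : ℤ) = 1 := by exact_mod_cast h3
      omega
    exact h2 (hsub (Set.mem_univ _) (Set.mem_univ _))
  obtain ⟨ε₀, hε₀0, hεE⟩ := Stmt12.lower_bound hirr hF ht hne hcl hnu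
  have hbig : ∀ n : ℕ, n ≤ sepCount ⇑f (NW ⇑f) n ε₀ := by
    intro n
    obtain ⟨E, hEY, hEsep, hEcard⟩ := hεE n
    exact le_csSup (Stmt12.sepCount_bddAbove hF hε₀0) ⟨E, hEY, hEsep, hEcard⟩
  unfold hpolOn
  refine le_antisymm (iSup_le fun ε => Stmt12.limsup_le_one hF ε.2) ?_
  refine le_trans (Stmt12.one_le_limsup hF hε₀0 hbig) ?_
  exact le_iSup (fun ε : {ε : ℝ // 0 < ε} => Filter.limsup (fun n : ℕ =>
      ((Real.log (sepCount ⇑f (NW ⇑f) n (ε : ℝ)) / Real.log n : ℝ) : EReal)) Filter.atTop)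
    ⟨ε₀, hε₀0⟩
end
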